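/- arXiv:2001.03670 — 7 statements merged into one kernel-verified Lean document; each statement's English description precedes it below -/
import Mathlib

section
/- Let P be a finite poset that is partitioned into disjoint antichains A_1, A_2, …, A_m (not necessarily the rank antichains). Then the number e(P) of linear extensions of P satisfies e(P) ≥ ∏_{i=1}^{m} |A_i|!. -/
set_option maxRecDepth 8000

/-- The number of linear extensions of a finite poset `α`: order-preserving
bijections from `α` to `Fin (card α)` (equivalently, to `{1,…,n}`). -/
noncomputable def linExt (α : Type*) [Fintype α] [PartialOrder α] : ℕ :=
  Nat.card {f : α ≃ Fin (Fintype.card α) // ∀ x y : α, x < y → f x < f y}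

section AntichainLB

open Finset List

attribute [local instance 2000] Classical.propDecidable

variable {α : Type*} [PartialOrder α]

/-- Lists that enumerate the finset `s` in a way compatible with the partial order
(no element appears after something strictly above it). -/
noncomputable def extL (s : Finset α) : Finset (List α) :=
  s.toList.permutations.toFinset.filter fun l => l.Pairwise (fun a b => ¬ b < a)

lemma mem_extL {s : Finset α} {l : List α} :
    l ∈ extL s ↔ (l : Multiset α) = s.val ∧ l.Pairwise (fun a b => ¬ b < a) := by
  unfold extL
  rw [Finset.mem_filter, List.mem_toFinset, List.mem_permutations,
    and_congr_left_iff]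
  intro _
  rw [← Multiset.coe_eq_coe, Finset.coe_toList]

lemma extL_mem_iff {s : Finset α} {l : List α} (h : l ∈ extL s) {a : α} :
    a ∈ l ↔ a ∈ s := by
  have hval := (mem_extL.1 h).1
  rw [← Multiset.mem_coe, hval, Finset.mem_val]

lemma extL_ne_nil {s : Finset α} {l : List α} (h : l ∈ extL s) (hs : s.Nonempty) :
    l ≠ [] := by
  rintro rfl
  have hval := (mem_extL.1 h).1
  simp only [Multiset.coe_nil] at hval
  exact hs.ne_empty (Finset.val_eq_zero.1 hval.symm)

lemma extL_empty : extL (∅ : Finset α) = {[]} := by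
  ext l
  simp only [mem_extL, Finset.empty_val, Finset.mem_singleton]
  constructor
  · rintro ⟨h, -⟩
    exact (Multiset.coe_eq_zero l).1 h
  · rintro rfl
    simp

/-- Minimal elements of a finset. -/
noncomputable def minsF (s : Finset α) : Finset α := s.filter fun y => ∀ b ∈ s, ¬ b < y

lemma mem_minsF {s : Finset α} {y : α} :
    y ∈ minsF s ↔ y ∈ s ∧ ∀ b ∈ s, ¬ b < y := by
  simp [minsF]

lemma minsF_subset {s : Finset α} : minsF s ⊆ s := Finset.filter_subset _ _

lemma cons_mem_extL {s : Finset α} {y : α} {t : List α} :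
    y :: t ∈ extL s ↔ y ∈ minsF s ∧ t ∈ extL (s.erase y) := by
  rw [mem_extL, mem_extL, mem_minsF, List.pairwise_cons]
  have hcoe : ((y :: t : List α) : Multiset α) = y ::ₘ (t : Multiset α) := rfl
  constructor
  · rintro ⟨hval, hy, hpw⟩
    rw [hcoe] at hval
    have hys : y ∈ s := by
      rw [← Finset.mem_val, ← hval]; exact Multiset.mem_cons_self _ _
    have ht : (t : Multiset α) = (s.erase y).val := by
      rw [Finset.erase_val, ← hval, Multiset.erase_cons_head]
    have hmem : ∀ a, a ∈ t ↔ a ∈ s.erase y := fun a => by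
      rw [← Multiset.mem_coe, ht, Finset.mem_val]
    refine ⟨⟨hys, ?_⟩, ht, hpw⟩
    intro b hb hlt
    rcases eq_or_ne b y with rfl | hne
    · exact absurd hlt (lt_irrefl _)
    · exact hy b ((hmem b).2 (Finset.mem_erase.2 ⟨hne, hb⟩)) hlt
  · rintro ⟨⟨hys, hmin⟩, ht, hpw⟩
    have hmem : ∀ a, a ∈ t ↔ a ∈ s.erase y := fun a => by
      rw [← Multiset.mem_coe, ht, Finset.mem_val]
    refine ⟨?_, ?_, hpw⟩
    · rw [hcoe, ht, Finset.erase_val]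
      exact Multiset.cons_erase (Finset.mem_def.1 hys)
    · intro a ha
      exact hmin a (Finset.mem_of_mem_erase ((hmem a).1 ha))

/-- Master decomposition: counting extension lists of `s` satisfying `Φ`,
grouped by the first (minimal) element. -/
lemma extL_filter_card (s : Finset α) (hs : s.Nonempty) (Φ : List α → Prop) :
    ((extL s).filter Φ).card
      = ∑ y ∈ minsF s, ((extL (s.erase y)).filter fun t => Φ (y :: t)).card := by
  have hset : (extL s).filter Φ
      = (minsF s).biUnion (fun y =>
          (((extL (s.erase y)).filter fun t => Φ (y :: t)).image (fun t => y :: t))) := by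
    ext l
    simp only [Finset.mem_filter, Finset.mem_biUnion, Finset.mem_image]
    constructor
    · rintro ⟨hl, hΦ⟩
      obtain ⟨y, t, rfl⟩ : ∃ y t, l = y :: t := by
        cases l with
        | nil => exact absurd rfl (extL_ne_nil hl hs)
        | cons a b => exact ⟨a, b, rfl⟩
      obtain ⟨h1, h2⟩ := cons_mem_extL.1 hl
      exact ⟨y, h1, t, ⟨⟨h2, hΦ⟩, rfl⟩⟩
    · rintro ⟨y, hy, t, ⟨ht, hΦ⟩, rfl⟩
      exact ⟨cons_mem_extL.2 ⟨hy, ht⟩, hΦ⟩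
  rw [hset, Finset.card_biUnion]
  · exact Finset.sum_congr rfl fun y _ =>
      Finset.card_image_of_injective _ (fun a b h => by injection h)
  · intro a ha b hb hab
    rw [Function.onFun_apply, Finset.disjoint_left]
    rintro l hla hlb
    obtain ⟨t, -, rfl⟩ := Finset.mem_image.1 hla
    obtain ⟨t', -, h⟩ := Finset.mem_image.1 hlb
    injection h with h1 _
    exact hab (h1.symm ▸ rfl)

lemma extL_card_eq_sum (s : Finset α) (hs : s.Nonempty) :
    (extL s).card = ∑ y ∈ minsF s, (extL (s.erase y)).card := by
  have h := extL_filter_card s hs (fun _ => True)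
  simpa using h

/-- The greedy chain of an extension list (head of the result is the bottom of the chain). -/
noncomputable def chainOf : List α → List α
  | [] => []
  | y :: t =>
    match chainOf t with
    | [] => [y]
    | b :: r => if y < b then y :: b :: r else b :: r

@[simp] lemma chainOf_nil : chainOf ([] : List α) = [] := rfl

lemma chainOf_cons (y : α) (t : List α) :
    chainOf (y :: t) = match chainOf t with
      | [] => [y]
      | b :: r => if y < b then y :: b :: r else b :: r := by
  rw [chainOf]

lemma chainOf_cons_of_eq_nil {t : List α} (h : chainOf t = []) (y : α) :
    chainOf (y :: t) = [y] := by rw [chainOf_cons, h]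

lemma chainOf_cons_of_lt {t : List α} {b : α} {r : List α}
    (h : chainOf t = b :: r) {y : α} (hy : y < b) :
    chainOf (y :: t) = y :: b :: r := by rw [chainOf_cons, h]; simp [hy]

lemma chainOf_cons_of_not_lt {t : List α} {b : α} {r : List α}
    (h : chainOf t = b :: r) {y : α} (hy : ¬ y < b) :
    chainOf (y :: t) = b :: r := by rw [chainOf_cons, h]; simp [hy]

lemma chainOf_eq_nil_iff {l : List α} : chainOf l = [] ↔ l = [] := by
  constructor
  · intro h
    cases l with
    | nil => rfl
    | cons y t =>
      exfalso
      rcases hct : chainOf t with - | ⟨b, r⟩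
      · rw [chainOf_cons_of_eq_nil hct] at h; simp at h
      · by_cases hy : y < b
        · rw [chainOf_cons_of_lt hct hy] at h; simp at h
        · rw [chainOf_cons_of_not_lt hct hy] at h; simp at h
  · rintro rfl; rfl

lemma chainOf_subset : ∀ {l : List α} {a : α}, a ∈ chainOf l → a ∈ l := by
  intro l
  induction l with
  | nil => intro a ha; simpa using ha
  | cons y t ih =>
    intro a ha
    rcases hct : chainOf t with - | ⟨b, r⟩
    · rw [chainOf_cons_of_eq_nil hct] at ha
      simp only [List.mem_singleton] at ha
      simp [ha]
    · by_cases hy : y < b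
      · rw [chainOf_cons_of_lt hct hy] at ha
        rcases List.mem_cons.1 ha with rfl | ha'
        · simp
        · exact List.mem_cons_of_mem _ (ih (hct ▸ ha'))
      · rw [chainOf_cons_of_not_lt hct hy] at ha
        exact List.mem_cons_of_mem _ (ih (hct ▸ ha))

lemma chainOf_pairwise : ∀ (l : List α), (chainOf l).Pairwise (· < ·) := by
  intro l
  induction l with
  | nil => simp
  | cons y t ih =>
    rcases hct : chainOf t with - | ⟨b, r⟩
    · rw [chainOf_cons_of_eq_nil hct]; simp
    · rw [hct] at ih
      by_cases hy : y < b
      · rw [chainOf_cons_of_lt hct hy]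
        refine List.pairwise_cons.2 ⟨?_, ih⟩
        intro z hz
        rcases List.mem_cons.1 hz with rfl | hz'
        · exact hy
        · exact hy.trans ((List.pairwise_cons.1 ih).1 z hz')
      · rw [chainOf_cons_of_not_lt hct hy]
        exact ih

/-- The bottom (head) of the greedy chain is minimal in the list, assuming
that the list is an extension list. -/
lemma chainOf_head_min : ∀ {l : List α}, l.Pairwise (fun a b => ¬ b < a) →
    ∀ {b : α}, (chainOf l).head? = some b → ∀ a ∈ l, ¬ a < b := by
  intro l
  induction l with
  | nil => intro _ b hb; simp at hb
  | cons y t ih =>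
    intro hpw b hb a ha
    rw [List.pairwise_cons] at hpw
    rcases hct : chainOf t with - | ⟨c, r⟩
    · rw [chainOf_cons_of_eq_nil hct] at hb
      simp only [List.head?_cons, Option.some.injEq] at hb
      subst hb
      rcases List.mem_cons.1 ha with rfl | ha'
      · exact lt_irrefl _
      · exact hpw.1 a ha'
    · by_cases hy : y < c
      · rw [chainOf_cons_of_lt hct hy] at hb
        simp only [List.head?_cons, Option.some.injEq] at hb
        subst hb
        rcases List.mem_cons.1 ha with rfl | ha'
        · exact lt_irrefl _
        · exact hpw.1 a ha'
      · rw [chainOf_cons_of_not_lt hct hy] at hb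
        simp only [List.head?_cons, Option.some.injEq] at hb
        subst hb
        rcases List.mem_cons.1 ha with rfl | ha'
        · exact hy
        · exact ih hpw.2 (by rw [hct]; rfl) a ha'

lemma mem_chainOf_cons_of_ne {x y : α} {t : List α} (hxy : x ≠ y) :
    x ∈ chainOf (y :: t) ↔ x ∈ chainOf t := by
  rcases hct : chainOf t with - | ⟨b, r⟩
  · rw [chainOf_cons_of_eq_nil hct]
    simp [hxy]
  · by_cases hy : y < b
    · rw [chainOf_cons_of_lt hct hy]
      simp [hxy]
    · rw [chainOf_cons_of_not_lt hct hy]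

lemma mem_chainOf_cons_self {x : α} {t : List α} (htne : t ≠ []) (hxt : x ∉ t) :
    x ∈ chainOf (x :: t) ↔ ∃ b, (chainOf t).head? = some b ∧ x < b := by
  have hct_ne : chainOf t ≠ [] := fun h => htne (chainOf_eq_nil_iff.1 h)
  rcases hct : chainOf t with - | ⟨b, r⟩
  · exact absurd hct hct_ne
  · by_cases hy : x < b
    · rw [chainOf_cons_of_lt hct hy]
      simp [hy]
    · rw [chainOf_cons_of_not_lt hct hy]
      constructor
      · intro hx
        have hx' : x ∈ chainOf t := by rw [hct]; exact hx
        exact absurd (chainOf_subset hx') hxt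
      · rintro ⟨b', hb', hlt⟩
        simp only [List.head?_cons, Option.some.injEq] at hb'
        exact absurd (hb' ▸ hlt) hy

lemma headOfCons_eq_some_self {w : α} {t : List α} (htne : t ≠ []) (hwt : w ∉ t) :
    (chainOf (w :: t)).head? = some w ↔ ∃ b, (chainOf t).head? = some b ∧ w < b := by
  have hct_ne : chainOf t ≠ [] := fun h => htne (chainOf_eq_nil_iff.1 h)
  rcases hct : chainOf t with - | ⟨b, r⟩
  · exact absurd hct hct_ne
  · by_cases hy : w < b
    · rw [chainOf_cons_of_lt hct hy]
      simp [hy]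
    · rw [chainOf_cons_of_not_lt hct hy]
      simp only [List.head?_cons, Option.some.injEq]
      constructor
      · rintro rfl
        have hb' : b ∈ chainOf t := by rw [hct]; exact List.mem_cons_self
        exact absurd (chainOf_subset hb') hwt
      · rintro ⟨b', hb', hlt⟩
        cases hb'
        exact absurd hlt hy

lemma headOfCons_eq_some_other {y w : α} {t : List α} (htne : t ≠ [])
    (hyw : y ≠ w) (hnyl : ¬ y < w) :
    (chainOf (y :: t)).head? = some w ↔ (chainOf t).head? = some w := by
  have hct_ne : chainOf t ≠ [] := fun h => htne (chainOf_eq_nil_iff.1 h)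
  rcases hct : chainOf t with - | ⟨b, r⟩
  · exact absurd hct hct_ne
  · by_cases hy : y < b
    · rw [chainOf_cons_of_lt hct hy]
      simp only [List.head?_cons, Option.some.injEq]
      constructor
      · rintro rfl
        exact absurd rfl hyw
      · rintro rfl
        exact absurd hy hnyl
    · rw [chainOf_cons_of_not_lt hct hy]

/-- Partition of the minimal elements after erasing a minimal element. -/
lemma minsF_erase_of_mem (s : Finset α) {w : α} (hw : w ∈ minsF s) :
    minsF (s.erase w)
      = ((minsF s).erase w) ∪ ((minsF (s.erase w)).filter fun u => w < u) := by
  ext u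
  simp only [Finset.mem_union, Finset.mem_filter]
  constructor
  · intro h
    obtain ⟨hu, humin⟩ := mem_minsF.1 h
    by_cases hwu : w < u
    · exact Or.inr ⟨h, hwu⟩
    · refine Or.inl (Finset.mem_erase.2 ⟨(Finset.mem_erase.1 hu).1,
        mem_minsF.2 ⟨Finset.mem_of_mem_erase hu, ?_⟩⟩)
      intro b hb
      rcases eq_or_ne b w with rfl | hne
      · exact fun h' => hwu h'
      · exact humin b (Finset.mem_erase.2 ⟨hne, hb⟩)
  · rintro (hu | ⟨hu, -⟩)
    · obtain ⟨hne, hum⟩ := Finset.mem_erase.1 hu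
      obtain ⟨hus, humin⟩ := mem_minsF.1 hum
      exact mem_minsF.2 ⟨Finset.mem_erase.2 ⟨hne, hus⟩,
        fun b hb => humin b (Finset.mem_of_mem_erase hb)⟩
    · exact hu

lemma minsF_erase_disj (s : Finset α) {w : α} (hws : w ∈ s) :
    Disjoint ((minsF s).erase w) ((minsF (s.erase w)).filter fun u => w < u) := by
  rw [Finset.disjoint_left]
  rintro u hu1 hu2
  have h1 : u ∈ minsF s := Finset.mem_of_mem_erase hu1
  have hwu : w < u := (Finset.mem_filter.1 hu2).2
  exact (mem_minsF.1 h1).2 w hws hwu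

lemma minsF_erase_of_not_mem (s : Finset α) {x : α} (hx : x ∈ s) (hxm : x ∉ minsF s) :
    minsF (s.erase x) = minsF s := by
  obtain ⟨z, hz, hzx⟩ : ∃ z ∈ s, z < x := by
    by_contra h
    push_neg at h
    exact hxm (mem_minsF.2 ⟨hx, fun b hb => h b hb⟩)
  ext u
  constructor
  · intro h
    obtain ⟨hu, humin⟩ := mem_minsF.1 h
    refine mem_minsF.2 ⟨Finset.mem_of_mem_erase hu, fun b hb hlt => ?_⟩
    rcases eq_or_ne b x with rfl | hbx
    · exact humin z (Finset.mem_erase.2 ⟨fun h' => (h' ▸ hzx).false, hz⟩) (hzx.trans hlt)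
    · exact humin b (Finset.mem_erase.2 ⟨hbx, hb⟩) hlt
  · intro h
    obtain ⟨hu, humin⟩ := mem_minsF.1 h
    have hne : u ≠ x := fun h' => humin z hz (h' ▸ hzx)
    exact mem_minsF.2 ⟨Finset.mem_erase.2 ⟨hne, hu⟩,
      fun b hb => humin b (Finset.mem_of_mem_erase hb)⟩

/-- The set of extension lists of `s'` whose greedy-chain bottom is above `w`,
written as a disjoint union over the possible bottoms. -/
lemma Tw_set (s' : Finset α) (hne : s'.Nonempty) (w : α) :
    (extL s').filter (fun t => ∃ b, (chainOf t).head? = some b ∧ w < b)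
      = ((minsF s').filter (fun u => w < u)).biUnion
          (fun u => (extL s').filter fun t => (chainOf t).head? = some u) := by
  ext t
  simp only [Finset.mem_filter, Finset.mem_biUnion]
  constructor
  · rintro ⟨ht, b, hb, hwb⟩
    have hbt : b ∈ t := chainOf_subset (List.mem_of_mem_head? hb)
    have hbs : b ∈ s' := (extL_mem_iff ht).1 hbt
    have hbmin : b ∈ minsF s' := by
      refine mem_minsF.2 ⟨hbs, fun a ha => ?_⟩
      exact chainOf_head_min (mem_extL.1 ht).2 hb a ((extL_mem_iff ht).2 ha)
    exact ⟨b, ⟨hbmin, hwb⟩, ht, hb⟩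
  · rintro ⟨u, ⟨hu1, hu2⟩, ht, hhu⟩
    exact ⟨ht, u, hhu, hu2⟩

/-- Key counting lemma F: the number of extension lists whose greedy chain
bottoms out at the minimal element `w` equals `e(s - w)`. -/
lemma F_aux : ∀ (N : ℕ) (s : Finset α), s.card ≤ N → ∀ w ∈ minsF s,
    ((extL s).filter fun l => (chainOf l).head? = some w).card
      = (extL (s.erase w)).card := by
  intro N
  induction N with
  | zero =>
    intro s hs w hw
    have : s = ∅ := Finset.card_eq_zero.1 (Nat.le_zero.1 hs)
    subst this
    simp [minsF] at hw
  | succ N IH =>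
    intro s hcard w hw
    have hws : w ∈ s := (mem_minsF.1 hw).1
    have hsne : s.Nonempty := ⟨w, hws⟩
    rw [extL_filter_card s hsne]
    rw [← Finset.add_sum_erase _ _ hw]
    by_cases hsw : s.erase w = ∅
    · -- s = {w}
      have hsub : ∀ a ∈ s, a = w := by
        intro a ha
        by_contra hne
        exact (Finset.notMem_empty a) (hsw ▸ Finset.mem_erase.2 ⟨hne, ha⟩)
      have h1 : (minsF s).erase w = ∅ := by
        rw [Finset.eq_empty_iff_forall_notMem]
        intro a ha
        obtain ⟨hne, has⟩ := Finset.mem_erase.1 ha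
        exact hne (hsub a (minsF_subset has))
      rw [h1, Finset.sum_empty, hsw, extL_empty]
      have : (chainOf [w]).head? = some w := by
        rw [chainOf_cons_of_eq_nil chainOf_nil]; rfl
      rw [Finset.filter_singleton]
      simp [this]
    · have hswne : (s.erase w).Nonempty := Finset.nonempty_iff_ne_empty.2 hsw
      have hcard' : (s.erase w).card ≤ N := by
        rw [Finset.card_erase_of_mem hws]
        exact Nat.sub_le_sub_right hcard 1
      -- the y = w term
      have hTw : ((extL (s.erase w)).filter fun t => (chainOf (w :: t)).head? = some w).card
          = ∑ u ∈ (minsF (s.erase w)).filter (fun u => w < u),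
              (extL ((s.erase w).erase u)).card := by
        have hcong : (extL (s.erase w)).filter (fun t => (chainOf (w :: t)).head? = some w)
            = (extL (s.erase w)).filter
                (fun t => ∃ b, (chainOf t).head? = some b ∧ w < b) := by
          apply Finset.filter_congr
          intro t ht
          have htne : t ≠ [] := extL_ne_nil ht hswne
          have hwt : w ∉ t := fun hmem =>
            (Finset.notMem_erase w s) ((extL_mem_iff ht).1 hmem)
          exact headOfCons_eq_some_self htne hwt
        rw [hcong, Tw_set _ hswne, Finset.card_biUnion]
        · refine Finset.sum_congr rfl fun u hu => ?_
          obtain ⟨humin, -⟩ := Finset.mem_filter.1 hu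
          exact IH (s.erase w) hcard' u humin
        · intro a ha b hb hab
          rw [Function.onFun_apply, Finset.disjoint_left]
          rintro t ht1 ht2
          have h1 := (Finset.mem_filter.1 ht1).2
          have h2 := (Finset.mem_filter.1 ht2).2
          rw [h1] at h2
          exact hab (Option.some.inj h2)
      -- the y ≠ w terms
      have hTy : ∀ y ∈ (minsF s).erase w,
          ((extL (s.erase y)).filter fun t => (chainOf (y :: t)).head? = some w).card
            = (extL ((s.erase w).erase y)).card := by
        intro y hy
        obtain ⟨hyw, hymin⟩ := Finset.mem_erase.1 hy
        have hys : y ∈ s := minsF_subset hymin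
        have hwse : w ∈ s.erase y := Finset.mem_erase.2 ⟨fun h => hyw h.symm, hws⟩
        have hsyne : (s.erase y).Nonempty := ⟨w, hwse⟩
        have hcong : (extL (s.erase y)).filter (fun t => (chainOf (y :: t)).head? = some w)
            = (extL (s.erase y)).filter (fun t => (chainOf t).head? = some w) := by
          apply Finset.filter_congr
          intro t ht
          have htne : t ≠ [] := extL_ne_nil ht hsyne
          have hnyl : ¬ y < w := (mem_minsF.1 hw).2 y hys
          exact headOfCons_eq_some_other htne hyw hnyl
        have hwmins : w ∈ minsF (s.erase y) := by
          refine mem_minsF.2 ⟨hwse, fun b hb => ?_⟩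
          exact (mem_minsF.1 hw).2 b (Finset.mem_of_mem_erase hb)
        have hcard'' : (s.erase y).card ≤ N := by
          rw [Finset.card_erase_of_mem hys]
          exact Nat.sub_le_sub_right hcard 1
        rw [hcong, IH (s.erase y) hcard'' w hwmins, Finset.erase_right_comm]
      rw [Finset.sum_congr rfl hTy, hTw]
      have hRHS : (extL (s.erase w)).card
          = ∑ y ∈ ((minsF s).erase w) ∪ ((minsF (s.erase w)).filter fun u => w < u),
              (extL ((s.erase w).erase y)).card := by
        rw [extL_card_eq_sum (s.erase w) hswne]
        exact Finset.sum_congr (minsF_erase_of_mem s hw) (fun _ _ => rfl)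
      rw [hRHS, Finset.sum_union (minsF_erase_disj s hws)]
      exact Nat.add_comm _ _

/-- Key counting lemma E: the number of extension lists whose greedy chain
passes through `x` equals `e(s - x)`. -/
lemma E_aux : ∀ (N : ℕ) (s : Finset α), s.card ≤ N → ∀ x ∈ s,
    ((extL s).filter fun l => x ∈ chainOf l).card = (extL (s.erase x)).card := by
  intro N
  induction N with
  | zero =>
    intro s hs x hx
    have : s = ∅ := Finset.card_eq_zero.1 (Nat.le_zero.1 hs)
    subst this
    simp at hx
  | succ N IH =>
    intro s hcard x hxs
    have hsne : s.Nonempty := ⟨x, hxs⟩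
    rw [extL_filter_card s hsne]
    by_cases hxm : x ∈ minsF s
    · rw [← Finset.add_sum_erase _ _ hxm]
      by_cases hsx : s.erase x = ∅
      · have hsub : ∀ a ∈ s, a = x := by
          intro a ha
          by_contra hne
          exact (Finset.notMem_empty a) (hsx ▸ Finset.mem_erase.2 ⟨hne, ha⟩)
        have h1 : (minsF s).erase x = ∅ := by
          rw [Finset.eq_empty_iff_forall_notMem]
          intro a ha
          obtain ⟨hne, has⟩ := Finset.mem_erase.1 ha
          exact hne (hsub a (minsF_subset has))
        rw [h1, Finset.sum_empty, hsx, extL_empty]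
        have : x ∈ chainOf [x] := by
          rw [chainOf_cons_of_eq_nil chainOf_nil]; simp
        rw [Finset.filter_singleton]
        simp [this]
      · have hsxne : (s.erase x).Nonempty := Finset.nonempty_iff_ne_empty.2 hsx
        have hcard' : (s.erase x).card ≤ N := by
          rw [Finset.card_erase_of_mem hxs]
          exact Nat.sub_le_sub_right hcard 1
        have hTw : ((extL (s.erase x)).filter fun t => x ∈ chainOf (x :: t)).card
            = ∑ u ∈ (minsF (s.erase x)).filter (fun u => x < u),
                (extL ((s.erase x).erase u)).card := by
          have hcong : (extL (s.erase x)).filter (fun t => x ∈ chainOf (x :: t))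
              = (extL (s.erase x)).filter
                  (fun t => ∃ b, (chainOf t).head? = some b ∧ x < b) := by
            apply Finset.filter_congr
            intro t ht
            have htne : t ≠ [] := extL_ne_nil ht hsxne
            have hxt : x ∉ t := fun hmem =>
              (Finset.notMem_erase x s) ((extL_mem_iff ht).1 hmem)
            exact mem_chainOf_cons_self htne hxt
          rw [hcong, Tw_set _ hsxne, Finset.card_biUnion]
          · refine Finset.sum_congr rfl fun u hu => ?_
            obtain ⟨humin, -⟩ := Finset.mem_filter.1 hu
            exact F_aux N (s.erase x) hcard' u humin
          · intro a ha b hb hab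
            rw [Function.onFun_apply, Finset.disjoint_left]
            rintro t ht1 ht2
            have h1 := (Finset.mem_filter.1 ht1).2
            have h2 := (Finset.mem_filter.1 ht2).2
            rw [h1] at h2
            exact hab (Option.some.inj h2)
        have hTy : ∀ y ∈ (minsF s).erase x,
            ((extL (s.erase y)).filter fun t => x ∈ chainOf (y :: t)).card
              = (extL ((s.erase x).erase y)).card := by
          intro y hy
          obtain ⟨hyx, hymin⟩ := Finset.mem_erase.1 hy
          have hys : y ∈ s := minsF_subset hymin
          have hxse : x ∈ s.erase y := Finset.mem_erase.2 ⟨fun h => hyx h.symm, hxs⟩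
          have hcong : (extL (s.erase y)).filter (fun t => x ∈ chainOf (y :: t))
              = (extL (s.erase y)).filter (fun t => x ∈ chainOf t) := by
            apply Finset.filter_congr
            intro t ht
            exact mem_chainOf_cons_of_ne (fun h => hyx h.symm)
          have hcard'' : (s.erase y).card ≤ N := by
            rw [Finset.card_erase_of_mem hys]
            exact Nat.sub_le_sub_right hcard 1
          rw [hcong, IH (s.erase y) hcard'' x hxse, Finset.erase_right_comm]
        rw [Finset.sum_congr rfl hTy, hTw]
        have hRHS : (extL (s.erase x)).card
            = ∑ y ∈ ((minsF s).erase x) ∪ ((minsF (s.erase x)).filter fun u => x < u),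
                (extL ((s.erase x).erase y)).card := by
          rw [extL_card_eq_sum (s.erase x) hsxne]
          exact Finset.sum_congr (minsF_erase_of_mem s hxm) (fun _ _ => rfl)
        rw [hRHS, Finset.sum_union (minsF_erase_disj s hxs)]
        exact Nat.add_comm _ _
    · -- x not minimal
      have hTy : ∀ y ∈ minsF s,
          ((extL (s.erase y)).filter fun t => x ∈ chainOf (y :: t)).card
            = (extL ((s.erase x).erase y)).card := by
        intro y hy
        have hys : y ∈ s := minsF_subset hy
        have hyx : y ≠ x := fun h => hxm (h ▸ hy)
        have hxse : x ∈ s.erase y := Finset.mem_erase.2 ⟨fun h => hyx h.symm, hxs⟩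
        have hcong : (extL (s.erase y)).filter (fun t => x ∈ chainOf (y :: t))
            = (extL (s.erase y)).filter (fun t => x ∈ chainOf t) := by
          apply Finset.filter_congr
          intro t ht
          exact mem_chainOf_cons_of_ne (fun h => hyx h.symm)
        have hcard'' : (s.erase y).card ≤ N := by
          rw [Finset.card_erase_of_mem hys]
          exact Nat.sub_le_sub_right hcard 1
        rw [hcong, IH (s.erase y) hcard'' x hxse, Finset.erase_right_comm]
      rw [Finset.sum_congr rfl hTy]
      have hsxne : (s.erase x).Nonempty := by
        rcases Finset.nonempty_iff_ne_empty.1 hsne with -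
        rw [Finset.nonempty_iff_ne_empty]
        intro h
        have hsub : ∀ a ∈ s, a = x := by
          intro a ha
          by_contra hne
          exact (Finset.notMem_empty a) (h ▸ Finset.mem_erase.2 ⟨hne, ha⟩)
        exact hxm (mem_minsF.2 ⟨hxs, fun b hb hlt => by
          have := hsub b hb; subst this; exact lt_irrefl _ hlt⟩)
      rw [extL_card_eq_sum (s.erase x) hsxne, minsF_erase_of_not_mem s hxs hxm]

/-- Helper: elements of a pairwise list are related or equal. -/
lemma pairwise_mem_cases {β : Type*} {R : β → β → Prop} :
    ∀ {l : List β}, l.Pairwise R → ∀ {a b : β}, a ∈ l → b ∈ l →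
      a = b ∨ R a b ∨ R b a := by
  intro l
  induction l with
  | nil => intro _ a b ha; simp at ha
  | cons c t ih =>
    intro h a b ha hb
    rw [List.pairwise_cons] at h
    rcases List.mem_cons.1 ha with rfl | ha'
    · rcases List.mem_cons.1 hb with rfl | hb'
      · exact Or.inl rfl
      · exact Or.inr (Or.inl (h.1 _ hb'))
    · rcases List.mem_cons.1 hb with rfl | hb'
      · exact Or.inr (Or.inr (h.1 _ ha'))
      · exact ih h.2 ha' hb'

/-- S5: for an antichain `B ⊆ s`, `∑_{x ∈ B} e(s - x) ≤ e(s)`. -/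
lemma sum_erase_le (s B : Finset α) (hBs : B ⊆ s)
    (hanti : ∀ a ∈ B, ∀ b ∈ B, a ≠ b → ¬ a < b) :
    ∑ x ∈ B, (extL (s.erase x)).card ≤ (extL s).card := by
  have h1 : ∀ x ∈ B, (extL (s.erase x)).card
      = ((extL s).filter fun l => x ∈ chainOf l).card := fun x hx =>
    (E_aux s.card s le_rfl x (hBs hx)).symm
  calc ∑ x ∈ B, (extL (s.erase x)).card
      = ∑ x ∈ B, ((extL s).filter fun l => x ∈ chainOf l).card :=
        Finset.sum_congr rfl h1
    _ = ∑ x ∈ B, ∑ l ∈ extL s, if x ∈ chainOf l then 1 else 0 := by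
        refine Finset.sum_congr rfl fun x _ => ?_
        rw [Finset.card_filter]
    _ = ∑ l ∈ extL s, ∑ x ∈ B, if x ∈ chainOf l then 1 else 0 := Finset.sum_comm
    _ ≤ ∑ l ∈ extL s, 1 := by
        refine Finset.sum_le_sum fun l hl => ?_
        rw [← Finset.card_filter]
        rw [Finset.card_le_one]
        intro a ha b hb
        obtain ⟨haB, hal⟩ := Finset.mem_filter.1 ha
        obtain ⟨hbB, hbl⟩ := Finset.mem_filter.1 hb
        rcases pairwise_mem_cases (chainOf_pairwise l) hal hbl with h | h | h
        · exact h
        · exact absurd h (hanti a haB b hbB (fun he => (he ▸ h).false))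
        · exact absurd h (hanti b hbB a haB (fun he => (he ▸ h).false))
    _ = (extL s).card := by simp

/-- Main inductive lemma: the factorial product lower bound over finsets. -/
lemma main_aux : ∀ (N : ℕ) (s : Finset α), s.card ≤ N → ∀ {m : ℕ}
    (B : Fin m → Finset α),
    (∀ i, ∀ a ∈ B i, ∀ b ∈ B i, a ≠ b → ¬ a < b) →
    (∀ i j, i ≠ j → ∀ a, a ∈ B i → a ∉ B j) →
    (∀ i, B i ⊆ s) →
    (∀ a ∈ s, ∃ i, a ∈ B i) →
    (∏ i, Nat.factorial ((B i).card)) ≤ (extL s).card := by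
  intro N
  induction N with
  | zero =>
    intro s hs m B hanti hdisj hsub hcov
    have hse : s = ∅ := Finset.card_eq_zero.1 (Nat.le_zero.1 hs)
    subst hse
    have hB : ∀ i, B i = ∅ := fun i => Finset.subset_empty.1 (hsub i)
    simp [hB, extL_empty]
  | succ N IH =>
    intro s hcard m B hanti hdisj hsub hcov
    rcases Finset.eq_empty_or_nonempty s with rfl | hsne
    · have hB : ∀ i, B i = ∅ := fun i => Finset.subset_empty.1 (hsub i)
      simp [hB, extL_empty]
    · obtain ⟨a, ha⟩ := hsne
      obtain ⟨i0, hai0⟩ := hcov a ha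
      have hBne : (B i0).Nonempty := ⟨a, hai0⟩
      obtain ⟨x, hxB, hmin⟩ :=
        Finset.exists_min_image (B i0) (fun y => (extL (s.erase y)).card) hBne
      have hx_s : x ∈ s := hsub i0 hxB
      have hS2 : (B i0).card * (extL (s.erase x)).card ≤ (extL s).card := by
        calc (B i0).card * (extL (s.erase x)).card
            = ∑ _y ∈ B i0, (extL (s.erase x)).card := by
              rw [Finset.sum_const, smul_eq_mul]
          _ ≤ ∑ y ∈ B i0, (extL (s.erase y)).card :=
              Finset.sum_le_sum fun y hy => hmin y hy
          _ ≤ (extL s).card :=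
              sum_erase_le s (B i0) (hsub i0) (hanti i0)
      have hcard' : (s.erase x).card ≤ N := by
        rw [Finset.card_erase_of_mem hx_s]
        exact Nat.sub_le_sub_right hcard 1
      have hIH : (∏ i, Nat.factorial (((B i).erase x).card)) ≤ (extL (s.erase x)).card := by
        refine IH (s.erase x) hcard' (fun i => (B i).erase x)
          (fun i a' ha' b hb hne => hanti i a' (Finset.mem_of_mem_erase ha')
            b (Finset.mem_of_mem_erase hb) hne)
          (fun i j hij a' ha' hb =>
            hdisj i j hij a' (Finset.mem_of_mem_erase ha') (Finset.mem_of_mem_erase hb))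
          (fun i a' ha' => Finset.mem_erase.2
            ⟨(Finset.mem_erase.1 ha').1, hsub i (Finset.mem_of_mem_erase ha')⟩)
          (fun a' ha' => ?_)
        obtain ⟨hne, has⟩ := Finset.mem_erase.1 ha'
        obtain ⟨i, hi⟩ := hcov a' has
        exact ⟨i, Finset.mem_erase.2 ⟨hne, hi⟩⟩
      have hpos : 0 < (B i0).card := Finset.card_pos.2 ⟨x, hxB⟩
      have hprod : (∏ i, Nat.factorial ((B i).card))
          = (B i0).card * (∏ i, Nat.factorial (((B i).erase x).card)) := by
        rw [← Finset.mul_prod_erase Finset.univ (fun i => Nat.factorial ((B i).card)) (Finset.mem_univ i0),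
          ← Finset.mul_prod_erase Finset.univ (fun i => Nat.factorial (((B i).erase x).card))
            (Finset.mem_univ i0)]
        have h2 : ∀ j ∈ Finset.univ.erase i0,
            Nat.factorial (((B j).erase x).card) = Nat.factorial ((B j).card) := by
          intro j hj
          have hji0 : j ≠ i0 := (Finset.mem_erase.1 hj).1
          have hxnotj : x ∉ B j := hdisj i0 j (fun h => hji0 h.symm) x hxB
          rw [Finset.erase_eq_of_notMem hxnotj]
        rw [Finset.prod_congr rfl h2]
        rw [Finset.card_erase_of_mem hxB]
        rw [← Nat.mul_factorial_pred hpos.ne']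
        ring
      calc (∏ i, Nat.factorial ((B i).card))
          = (B i0).card * (∏ i, Nat.factorial (((B i).erase x).card)) := hprod
        _ ≤ (B i0).card * (extL (s.erase x)).card :=
            Nat.mul_le_mul_left _ hIH
        _ ≤ (extL s).card := hS2

end AntichainLB

section Glue

open Finset List

variable {α : Type*} [Fintype α] [PartialOrder α]

/-- The equiv `α ≃ Fin n` associated with a complete nodup list. -/
noncomputable def listEquiv [DecidableEq α] (l : List α) (nd : l.Nodup) (hm : ∀ x, x ∈ l)
    (h : l.length = Fintype.card α) : α ≃ Fin (Fintype.card α) :=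
  (List.Nodup.getEquivOfForallMemList l nd hm).symm.trans (finCongr h)

lemma listEquiv_symm_apply [DecidableEq α] (l : List α) (nd : l.Nodup) (hm : ∀ x, x ∈ l)
    (h : l.length = Fintype.card α) (i : Fin l.length) :
    (listEquiv l nd hm h).symm (finCongr h i) = l.get i := by
  unfold listEquiv
  rw [Equiv.symm_trans_apply, Equiv.symm_apply_apply, Equiv.symm_symm]
  rfl

lemma listEquiv_lt [DecidableEq α] (l : List α) (nd : l.Nodup) (hm : ∀ x, x ∈ l)
    (h : l.length = Fintype.card α) (hpw : l.Pairwise fun a b => ¬ b < a)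
    {x y : α} (hxy : x < y) :
    listEquiv l nd hm h x < listEquiv l nd hm h y := by
  have e0get : ∀ i, (List.Nodup.getEquivOfForallMemList l nd hm) i = l.get i :=
    fun i => rfl
  have hx : listEquiv l nd hm h x
      = finCongr h ((List.Nodup.getEquivOfForallMemList l nd hm).symm x) := rfl
  have hy : listEquiv l nd hm h y
      = finCongr h ((List.Nodup.getEquivOfForallMemList l nd hm).symm y) := rfl
  rw [hx, hy]
  set e0 := List.Nodup.getEquivOfForallMemList l nd hm with he0
  rcases lt_trichotomy (e0.symm x) (e0.symm y) with hc | hc | hc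
  · rw [Fin.lt_def] at hc ⊢
    simpa [finCongr_apply] using hc
  · exfalso
    have hxy' : x = y := by
      have h1 := congrArg e0 hc
      rwa [Equiv.apply_symm_apply, Equiv.apply_symm_apply] at h1
    exact absurd (hxy' ▸ hxy) (lt_irrefl _)
  · exfalso
    have hno := List.pairwise_iff_get.1 hpw _ _ hc
    have hgx : l.get (e0.symm x) = x := by rw [← e0get]; exact e0.apply_symm_apply x
    have hgy : l.get (e0.symm y) = y := by rw [← e0get]; exact e0.apply_symm_apply y
    rw [hgx, hgy] at hno
    exact hno hxy

lemma extL_card_le_linExt :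
    (extL (Finset.univ : Finset α)).card ≤ linExt α := by
  classical
  have hprop : ∀ l : List α, l ∈ extL (Finset.univ : Finset α) →
      l.Nodup ∧ (∀ x : α, x ∈ l) ∧ l.length = Fintype.card α := by
    intro l hl
    obtain ⟨hval, -⟩ := mem_extL.1 hl
    refine ⟨?_, ?_, ?_⟩
    · have h1 : (l : Multiset α).Nodup := by rw [hval]; exact Finset.univ.nodup
      exact Multiset.coe_nodup.1 h1
    · intro x
      rw [← Multiset.mem_coe, hval]
      exact Finset.mem_univ x
    · have h2 : Multiset.card (l : Multiset α) = Multiset.card Finset.univ.val :=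
        congrArg Multiset.card hval
      rw [Multiset.coe_card] at h2
      rw [h2]
      exact Finset.card_univ
  let T := {f : α ≃ Fin (Fintype.card α) // ∀ x y : α, x < y → f x < f y}
  let S := {l : List α // l ∈ extL (Finset.univ : Finset α)}
  let F : S → T := fun l =>
    ⟨listEquiv l.1 (hprop l.1 l.2).1 (hprop l.1 l.2).2.1 (hprop l.1 l.2).2.2,
      fun x y hxy => listEquiv_lt _ _ _ _ (mem_extL.1 l.2).2 hxy⟩
  have hFinj : Function.Injective F := by
    intro l l' hF
    have hfeq : listEquiv l.1 (hprop l.1 l.2).1 (hprop l.1 l.2).2.1 (hprop l.1 l.2).2.2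
        = listEquiv l'.1 (hprop l'.1 l'.2).1 (hprop l'.1 l'.2).2.1 (hprop l'.1 l'.2).2.2 :=
      congrArg Subtype.val hF
    apply Subtype.ext
    have hlen : l.1.length = l'.1.length :=
      ((hprop l.1 l.2).2.2).trans ((hprop l'.1 l'.2).2.2).symm
    apply List.ext_get hlen
    intro i h1 h2
    have k1 := listEquiv_symm_apply l.1 (hprop l.1 l.2).1 (hprop l.1 l.2).2.1
      (hprop l.1 l.2).2.2 ⟨i, h1⟩
    have k2 := listEquiv_symm_apply l'.1 (hprop l'.1 l'.2).1 (hprop l'.1 l'.2).2.1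
      (hprop l'.1 l'.2).2.2 ⟨i, h2⟩
    rw [← k1, ← k2, hfeq]
    have hAB : (finCongr ((hprop l.1 l.2).2.2)) ⟨i, h1⟩
        = (finCongr ((hprop l'.1 l'.2).2.2)) ⟨i, h2⟩ := by
      apply Fin.ext
      simp
    rw [hAB]
  have hfin : Finite T := by
    have : Finite (α ≃ Fin (Fintype.card α)) := by infer_instance
    exact Subtype.finite
  have hcard := Nat.card_le_card_of_injective F hFinj
  have hSc : Nat.card S = (extL (Finset.univ : Finset α)).card := by
    rw [Nat.card_eq_fintype_card]
    exact Fintype.card_coe _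
  rw [hSc] at hcard
  exact hcard

end Glue

/-- **Lower bound for antichain partitions.**
If a finite poset `α` is partitioned into pairwise disjoint antichains
`A 0, …, A (m-1)`, then `e(α) ≥ ∏ i, |A i|!`. -/
theorem lower_bound_antichain_partition {α : Type*} [Fintype α] [PartialOrder α]
    (m : ℕ) (A : Fin m → Set α)
    (hanti : ∀ i, IsAntichain (· ≤ ·) (A i))
    (hdisj : ∀ i j, i ≠ j → Disjoint (A i) (A j))
    (hcover : (⋃ i, A i) = Set.univ) :
    ∏ i : Fin m, Nat.factorial (A i).ncard ≤ linExt α := by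
  classical
  set B : Fin m → Finset α := fun i => (A i).toFinset with hB
  have hmemB : ∀ i a, a ∈ B i ↔ a ∈ A i := by
    intro i a
    simp [hB]
  have hncard : ∀ i, (A i).ncard = (B i).card := by
    intro i
    rw [Set.ncard_eq_toFinset_card']
  have hmain : (∏ i, Nat.factorial ((B i).card)) ≤ (extL (Finset.univ : Finset α)).card := by
    refine main_aux (Finset.univ : Finset α).card (Finset.univ) le_rfl B ?_ ?_ ?_ ?_
    · intro i a ha b hb hne hlt
      exact hanti i ((hmemB i a).1 ha) ((hmemB i b).1 hb) hne hlt.le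
    · intro i j hij a hai haj
      exact Set.disjoint_left.1 (hdisj i j hij) ((hmemB i a).1 hai) ((hmemB j a).1 haj)
    · intro i a _
      exact Finset.mem_univ a
    · intro a _
      have : a ∈ ⋃ i, A i := by rw [hcover]; trivial
      obtain ⟨i, hi⟩ := Set.mem_iUnion.1 this
      exact ⟨i, (hmemB i a).2 hi⟩
  calc ∏ i : Fin m, Nat.factorial (A i).ncard
      = ∏ i, Nat.factorial ((B i).card) := by
        refine Finset.prod_congr rfl fun i _ => ?_
        rw [hncard i]
    _ ≤ (extL (Finset.univ : Finset α)).card := hmain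
    _ ≤ linExt α := extL_card_le_linExt
end

section
/- Let X and Y be finite multisets of non-negative integers. Then X majorizes Y if and only if for every log-convex function f : {0,1,2,…} → (0,∞) one has ∏_{x ∈ X} f(x) ≥ ∏_{y ∈ Y} f(y). -/
/-- `sk X k` is the sum of the `min(k, |X|)` largest elements of the
multiset `X` of non-negative integers. -/
def sk (X : Multiset ℕ) (k : ℕ) : ℕ := ((X.sort (· ≥ ·)).take k).sum

/-- `X` majorizes `Y`: the total sums agree and every partial sum of the
largest elements of `X` dominates the corresponding one of `Y`. -/
def Majorizes (X Y : Multiset ℕ) : Prop := X.sum = Y.sum ∧ ∀ k, sk Y k ≤ sk X k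

/-- `f : ℕ → ℝ` is log-convex: positive, `f 0 = 1`, and the ratio
`f (x+1) / f x` is weakly increasing in `x`. -/
def LogConvex (f : ℕ → ℝ) : Prop :=
  (∀ x, 0 < f x) ∧ f 0 = 1 ∧ Monotone fun x => f (x + 1) / f x

namespace MajAux

/-- tail truncation sum -/
def tt (Z : Multiset ℕ) (t : ℕ) : ℕ := (Z.map (· - t)).sum

lemma tt_coe (l : List ℕ) (t : ℕ) : tt ↑l t = (l.map (· - t)).sum := rfl

lemma tt_eq (Z : Multiset ℕ) (t : ℕ) :
    tt Z t = ((Z.sort (· ≥ ·)).map (· - t)).sum := by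
  rw [← tt_coe, Multiset.sort_eq]

lemma take_sum_le : ∀ (l : List ℕ) (k t : ℕ),
    (l.take k).sum ≤ k * t + (l.map (· - t)).sum
  | [], k, t => by simp
  | _ :: _, 0, t => by simp
  | x :: l, k+1, t => by
    simp only [List.take_succ_cons, List.sum_cons, List.map_cons]
    have hx : x ≤ t + (x - t) := by omega
    calc x + (l.take k).sum
        ≤ x + (k * t + (l.map (· - t)).sum) :=
          Nat.add_le_add_left (take_sum_le l k t) x
      _ ≤ (t + (x - t)) + (k * t + (l.map (· - t)).sum) :=
          Nat.add_le_add_right hx _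
      _ = (k + 1) * t + ((x - t) + (l.map (· - t)).sum) := by ring

lemma sk_le (Z : Multiset ℕ) (k t : ℕ) : sk Z k ≤ k * t + tt Z t := by
  rw [sk, tt_eq]; exact take_sum_le _ k t

lemma exists_k : ∀ (l : List ℕ), l.Pairwise (· ≥ ·) → ∀ t : ℕ,
    ∃ k, (l.map (· - t)).sum + k * t ≤ (l.take k).sum
  | [], _, t => ⟨0, by simp⟩
  | x :: l, h, t => by
    rcases List.pairwise_cons.1 h with ⟨hx, hs⟩
    by_cases hxt : x ≤ t
    · refine ⟨0, ?_⟩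
      have hz : ((x :: l).map (· - t)).sum = 0 := by
        apply List.sum_eq_zero
        intro y hy
        rcases List.mem_map.1 hy with ⟨z, hz, rfl⟩
        rcases List.mem_cons.1 hz with rfl | hz
        · omega
        · have := hx z hz; omega
      simp only [List.take_zero, List.sum_nil]
      omega
    · obtain ⟨k, hk⟩ := exists_k l hs t
      refine ⟨k + 1, ?_⟩
      simp only [List.map_cons, List.sum_cons, List.take_succ_cons]
      have hxx : x - t + t = x := by omega
      calc (x - t) + (l.map (· - t)).sum + (k + 1) * t
          = (x - t + t) + ((l.map (· - t)).sum + k * t) := by ring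
        _ ≤ x + (l.take k).sum := by
            rw [hxx]; exact Nat.add_le_add_left hk x

lemma exists_t : ∀ (l : List ℕ), l.Pairwise (· ≥ ·) → ∀ k : ℕ,
    ∃ t, (t = 0 ∨ t ∈ l) ∧ (l.map (· - t)).sum + k * t ≤ (l.take k).sum
  | [], _, k => ⟨0, Or.inl rfl, by simp⟩
  | x :: l, h, 0 => by
    rcases List.pairwise_cons.1 h with ⟨hx, _⟩
    refine ⟨x, Or.inr (List.mem_cons_self (a := x) (l := l)), ?_⟩
    have hz : ((x :: l).map (· - x)).sum = 0 := by
      apply List.sum_eq_zero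
      intro y hy
      rcases List.mem_map.1 hy with ⟨z, hz, rfl⟩
      rcases List.mem_cons.1 hz with rfl | hz
      · omega
      · have := hx z hz; omega
    simp only [List.take_zero, List.sum_nil]
    omega
  | x :: l, h, k+1 => by
    rcases List.pairwise_cons.1 h with ⟨hx, hs⟩
    obtain ⟨t, ht, hk⟩ := exists_t l hs k
    have htx : t ≤ x := by
      rcases ht with rfl | ht
      · exact Nat.zero_le x
      · exact hx t ht
    refine ⟨t, ?_, ?_⟩
    · rcases ht with rfl | ht
      · exact Or.inl rfl
      · exact Or.inr (List.mem_cons_of_mem x ht)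
    · simp only [List.map_cons, List.sum_cons, List.take_succ_cons]
      have hxx : x - t + t = x := by omega
      calc (x - t) + (l.map (· - t)).sum + (k + 1) * t
          = (x - t + t) + ((l.map (· - t)).sum + k * t) := by ring
        _ ≤ x + (l.take k).sum := by
            rw [hxx]; exact Nat.add_le_add_left hk x

lemma maj_tt {X Y : Multiset ℕ} (h : ∀ k, sk Y k ≤ sk X k) (t : ℕ) :
    tt Y t ≤ tt X t := by
  obtain ⟨k, hk⟩ := exists_k (Y.sort (· ≥ ·)) (Y.pairwise_sort _) t
  rw [← tt_eq] at hk
  have h1 : tt Y t + k * t ≤ sk Y k := hk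
  have h2 : sk X k ≤ k * t + tt X t := sk_le X k t
  have := h k
  omega

lemma tt_maj {X Y : Multiset ℕ} (h : ∀ t, tt Y t ≤ tt X t) (k : ℕ) :
    sk Y k ≤ sk X k := by
  obtain ⟨t, -, hk⟩ := exists_t (X.sort (· ≥ ·)) (X.pairwise_sort _) k
  rw [← tt_eq] at hk
  have h1 : sk Y k ≤ k * t + tt Y t := sk_le Y k t
  have h2 : tt X t + k * t ≤ sk X k := hk
  have := h t
  omega

lemma abel : ∀ (n : ℕ) (a : ℕ → ℝ) (m : ℕ → ℤ), Monotone a →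
    (∀ t, 0 ≤ ∑ i ∈ Finset.Ico t n, m i) →
    a 0 * (∑ i ∈ Finset.range n, (m i : ℝ)) ≤ ∑ i ∈ Finset.range n, (m i : ℝ) * a i := by
  intro n
  induction n with
  | zero => intro a m _ _; simp
  | succ n ih =>
    intro a m ha hm
    have hshift : ∀ t, ∑ i ∈ Finset.Ico t n, m (i+1) = ∑ i ∈ Finset.Ico (t+1) (n+1), m i := by
      intro t
      rw [Finset.sum_Ico_eq_sum_range, Finset.sum_Ico_eq_sum_range]
      simp only [Nat.add_sub_add_right]
      exact Finset.sum_congr rfl (fun i _ => by congr 1; omega)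
    have ih' := ih (fun i => a (i+1)) (fun i => m (i+1))
      (fun i j hij => ha (by omega : i + 1 ≤ j + 1))
      (fun t => by rw [hshift]; exact hm (t+1))
    have hS' : (0:ℝ) ≤ ∑ i ∈ Finset.range n, (m (i+1) : ℝ) := by
      have h1 := hm 1
      rw [← hshift 0] at h1
      rw [Finset.range_eq_Ico]
      exact_mod_cast h1
    have ha01 : a 0 ≤ a 1 := ha (by omega : (0:ℕ) ≤ 1)
    rw [Finset.sum_range_succ' (fun i => (m i : ℝ) * a i) n,
        Finset.sum_range_succ' (fun i => (m i : ℝ)) n]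
    nlinarith [ih', mul_nonneg (sub_nonneg.2 ha01) hS']

lemma swap_sum (a : ℕ → ℝ) : ∀ (Z : Multiset ℕ) (n : ℕ), (∀ x ∈ Z, x ≤ n) →
    (Z.map (fun x => ∑ i ∈ Finset.range x, a i)).sum
      = ∑ i ∈ Finset.range n, (Z.countP (fun x => i < x) : ℝ) * a i := by
  intro Z
  induction Z using Multiset.induction_on with
  | empty => intro n _; simp
  | cons x Z ih =>
    intro n h
    have hxn : x ≤ n := h x (Multiset.mem_cons_self x Z)
    have hZ : ∀ y ∈ Z, y ≤ n := fun y hy => h y (Multiset.mem_cons_of_mem hy)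
    have hfil : (Finset.range n).filter (fun i => i < x) = Finset.range x := by
      ext i; simp only [Finset.mem_filter, Finset.mem_range]; omega
    simp only [Multiset.map_cons, Multiset.sum_cons, Multiset.countP_cons, ih n hZ]
    push_cast
    simp only [add_mul, ite_mul, one_mul, zero_mul]
    rw [Finset.sum_add_distrib, ← Finset.sum_filter, hfil]
    ring

lemma tail_sum : ∀ (Z : Multiset ℕ) (n t : ℕ), (∀ x ∈ Z, x ≤ n) →
    ∑ i ∈ Finset.Ico t n, Z.countP (fun x => i < x) = (Z.map (· - t)).sum := by
  intro Z
  induction Z using Multiset.induction_on with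
  | empty => intro n t _; simp
  | cons x Z ih =>
    intro n t h
    have hxn : x ≤ n := h x (Multiset.mem_cons_self x Z)
    have hZ : ∀ y ∈ Z, y ≤ n := fun y hy => h y (Multiset.mem_cons_of_mem hy)
    have hfil : (Finset.Ico t n).filter (fun i => i < x) = Finset.Ico t x := by
      ext i; simp only [Finset.mem_filter, Finset.mem_Ico]; omega
    simp only [Multiset.map_cons, Multiset.sum_cons, Multiset.countP_cons, ← ih n t hZ]
    rw [Finset.sum_add_distrib]
    have hb : ∑ i ∈ Finset.Ico t n, (if i < x then 1 else 0)
        = ((Finset.Ico t n).filter (fun i => i < x)).card := by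
      rw [Finset.card_filter]
    rw [hb, hfil, Nat.card_Ico]
    omega

lemma prod_eq_exp (f : ℕ → ℝ) (hf : ∀ x, 0 < f x) : ∀ (Z : Multiset ℕ),
    (Z.map f).prod = Real.exp ((Z.map (fun x => Real.log (f x))).sum) := by
  intro Z
  induction Z using Multiset.induction_on with
  | empty => simp
  | cons x Z ih => simp [ih, Real.exp_add, Real.exp_log (hf x)]

lemma pow_prod (c : ℝ) : ∀ (Z : Multiset ℕ), (Z.map (fun x => c ^ x)).prod = c ^ Z.sum := by
  intro Z
  induction Z using Multiset.induction_on with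
  | empty => simp
  | cons x Z ih => simp [ih, pow_add]

lemma logConvex_pow (c : ℝ) (hc : 0 < c) : LogConvex (fun x => c ^ x) := by
  refine ⟨fun x => pow_pos hc x, pow_zero c, ?_⟩
  have h : (fun x : ℕ => c ^ (x+1) / c ^ x) = fun _ => c := by
    funext x
    rw [pow_succ]
    field_simp
  rw [h]; exact monotone_const

lemma logConvex_pow_sub (t : ℕ) : LogConvex (fun x => (2:ℝ) ^ (x - t)) := by
  refine ⟨fun x => pow_pos two_pos _, by simp, ?_⟩
  intro x y hxy
  simp only
  rw [div_eq_mul_inv, div_eq_mul_inv, ← pow_sub₀ (2:ℝ) two_ne_zero (by omega : x - t ≤ x + 1 - t),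
      ← pow_sub₀ (2:ℝ) two_ne_zero (by omega : y - t ≤ y + 1 - t)]
  exact pow_le_pow_right₀ one_le_two (by omega)

end MajAux

open MajAux in
/-- **Karamata-type majorization criterion.** A finite multiset `X` of
non-negative integers majorizes `Y` if and only if
`∏_{x ∈ X} f x ≥ ∏_{y ∈ Y} f y` for every log-convex function `f`. -/
theorem majorizes_iff_forall_logConvex (X Y : Multiset ℕ) :
    Majorizes X Y ↔ ∀ f : ℕ → ℝ, LogConvex f → (Y.map f).prod ≤ (X.map f).prod := by
  constructor
  · rintro ⟨hsum, hsk⟩ f ⟨hpos, h0, hmono⟩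
    set a : ℕ → ℝ := fun i => Real.log (f (i+1)) - Real.log (f i) with ha_def
    have hamono : Monotone a := by
      intro i j hij
      have h1 : f (i+1)/f i ≤ f (j+1)/f j := hmono hij
      have h2 := Real.log_le_log (div_pos (hpos _) (hpos _)) h1
      rw [Real.log_div (ne_of_gt (hpos _)) (ne_of_gt (hpos _)),
          Real.log_div (ne_of_gt (hpos _)) (ne_of_gt (hpos _))] at h2
      exact h2
    have hlog : ∀ x, Real.log (f x) = ∑ i ∈ Finset.range x, a i := by
      intro x
      rw [ha_def, Finset.sum_range_sub (fun i => Real.log (f i)) x, h0, Real.log_one, sub_zero]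
    set n : ℕ := X.sum + Y.sum with hn_def
    have hXn : ∀ x ∈ X, x ≤ n := fun x hx => le_trans (Multiset.le_sum_of_mem hx) (by omega)
    have hYn : ∀ y ∈ Y, y ≤ n := fun y hy => le_trans (Multiset.le_sum_of_mem hy) (by omega)
    set m : ℕ → ℤ := fun i => (X.countP (fun x => i < x) : ℤ) - (Y.countP (fun x => i < x) : ℤ)
      with hm_def
    have htail : ∀ t, 0 ≤ ∑ i ∈ Finset.Ico t n, m i := by
      intro t
      have hN : ∑ i ∈ Finset.Ico t n, Y.countP (fun x => i < x)
          ≤ ∑ i ∈ Finset.Ico t n, X.countP (fun x => i < x) := by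
        rw [tail_sum X n t hXn, tail_sum Y n t hYn]
        exact maj_tt hsk t
      simp only [hm_def, Finset.sum_sub_distrib, sub_nonneg]
      exact_mod_cast hN
    have hX0 : ∑ i ∈ Finset.Ico 0 n, X.countP (fun x => i < x) = X.sum := by
      have := tail_sum X n 0 hXn
      simpa using this
    have hY0 : ∑ i ∈ Finset.Ico 0 n, Y.countP (fun x => i < x) = Y.sum := by
      have := tail_sum Y n 0 hYn
      simpa using this
    have hmsum : ∑ i ∈ Finset.range n, (m i : ℝ) = 0 := by
      simp only [hm_def]
      push_cast
      rw [Finset.sum_sub_distrib, ← Nat.cast_sum, ← Nat.cast_sum, Finset.range_eq_Ico,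
        hX0, hY0, hsum, sub_self]
    have key := abel n a m hamono htail
    have hsplit : ∑ i ∈ Finset.range n, (m i : ℝ) * a i
        = (∑ i ∈ Finset.range n, (X.countP (fun x => i < x) : ℝ) * a i)
          - (∑ i ∈ Finset.range n, (Y.countP (fun x => i < x) : ℝ) * a i) := by
      rw [← Finset.sum_sub_distrib]
      refine Finset.sum_congr rfl (fun i _ => ?_)
      simp only [hm_def]
      push_cast
      ring
    have eX : (X.map (fun x => Real.log (f x))).sum
        = ∑ i ∈ Finset.range n, (X.countP (fun x => i < x) : ℝ) * a i := by
      rw [← swap_sum a X n hXn]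
      congr 1
      exact Multiset.map_congr rfl (fun x _ => hlog x)
    have eY : (Y.map (fun x => Real.log (f x))).sum
        = ∑ i ∈ Finset.range n, (Y.countP (fun x => i < x) : ℝ) * a i := by
      rw [← swap_sum a Y n hYn]
      congr 1
      exact Multiset.map_congr rfl (fun x _ => hlog x)
    have hlogsum : (Y.map (fun x => Real.log (f x))).sum
        ≤ (X.map (fun x => Real.log (f x))).sum := by
      rw [eX, eY, ← sub_nonneg, ← hsplit]
      calc (0:ℝ) = a 0 * 0 := by ring
        _ = a 0 * ∑ i ∈ Finset.range n, (m i : ℝ) := by rw [hmsum]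
        _ ≤ _ := key
    rw [prod_eq_exp f hpos X, prod_eq_exp f hpos Y]
    exact Real.exp_le_exp.2 hlogsum
  · intro hf
    have hsum : X.sum = Y.sum := by
      have h2 := hf (fun x => (2:ℝ) ^ x) (logConvex_pow 2 two_pos)
      have hh := hf (fun x => (1/2:ℝ) ^ x) (logConvex_pow (1/2) (by norm_num))
      rw [pow_prod, pow_prod] at h2 hh
      have e1 : Y.sum ≤ X.sum := (pow_le_pow_iff_right₀ (by norm_num : (1:ℝ) < 2)).1 h2
      have e2 : X.sum ≤ Y.sum :=
        ((pow_right_strictAnti₀ (by norm_num : (0:ℝ) < 1/2) (by norm_num)).le_iff_ge).1 hh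
      omega
    refine ⟨hsum, tt_maj (fun t => ?_)⟩
    have h2 := hf (fun x => (2:ℝ) ^ (x - t)) (logConvex_pow_sub t)
    have eX : (X.map (fun x => (2:ℝ) ^ (x - t))).prod = 2 ^ tt X t := by
      rw [tt, ← pow_prod, Multiset.map_map]
      rfl
    have eY : (Y.map (fun x => (2:ℝ) ^ (x - t))).prod = 2 ^ tt Y t := by
      rw [tt, ← pow_prod, Multiset.map_map]
      rfl
    rw [eX, eY] at h2
    exact (pow_le_pow_iff_right₀ (by norm_num : (1:ℝ) < 2)).1 h2
end

section
/- Let X, Y, Z be finite multisets of non-negative integers with s(X) = s(Y). Then X majorizes Y if and only if the multiset union X ∪ Z majorizes the multiset union Y ∪ Z. -/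
/-- `fsub X t = Σ_{x ∈ X} max(x - t, 0)`. -/
def fsub (X : Multiset ℕ) (t : ℕ) : ℕ := (X.map (fun x => x - t)).sum

lemma fsub_eq (X : Multiset ℕ) (t : ℕ) :
    fsub X t = ((X.sort (· ≥ ·)).map (fun x => x - t)).sum := by
  rw [fsub]
  conv_lhs => rw [← Multiset.sort_eq (s := X) (r := (· ≥ ·)), Multiset.map_coe, Multiset.sum_coe]

lemma list_sum_le (m : List ℕ) (t : ℕ) :
    m.sum ≤ (m.map (fun x => x - t)).sum + m.length * t := by
  induction m with
  | nil => simp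
  | cons a l ih =>
    simp only [List.sum_cons, List.map_cons, List.length_cons]
    have h : a ≤ a - t + t := by omega
    calc a + l.sum ≤ (a - t + t) + ((l.map (fun x => x - t)).sum + l.length * t) :=
          Nat.add_le_add h ih
      _ = (a - t) + (l.map (fun x => x - t)).sum + (l.length + 1) * t := by ring

/-- Lemma A : `sk X k ≤ fsub X t + k*t` for all `t`. -/
lemma sk_le_fsub (X : Multiset ℕ) (k t : ℕ) : sk X k ≤ fsub X t + k * t := by
  rw [fsub_eq, sk]
  set l := X.sort (· ≥ ·)
  calc (l.take k).sum ≤ ((l.take k).map (fun x => x - t)).sum + (l.take k).length * t :=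
        list_sum_le _ t
    _ ≤ (l.map (fun x => x - t)).sum + k * t := by
        apply Nat.add_le_add
        · conv_rhs => rw [← List.take_append_drop k l]
          rw [List.map_append, List.sum_append]
          exact Nat.le_add_right _ _
        · exact Nat.mul_le_mul_right t (by simp [List.length_take])

lemma exists_k_list (l : List ℕ) (hl : l.Pairwise (· ≥ ·)) (t : ℕ) :
    ∃ k, (l.map (fun x => x - t)).sum + k * t ≤ (l.take k).sum := by
  induction l with
  | nil => exact ⟨0, by simp⟩
  | cons a l ih =>
    rcases List.pairwise_cons.mp hl with ⟨ha, hl'⟩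
    by_cases h : a ≤ t
    · refine ⟨0, ?_⟩
      have hz : ((a :: l).map (fun x => x - t)).sum = 0 := by
        apply List.sum_eq_zero
        intro x hx
        obtain ⟨y, hy, rfl⟩ := List.mem_map.mp hx
        rcases List.mem_cons.mp hy with rfl | hy
        · omega
        · have := ha y hy; omega
      rw [hz]
      simp
    · obtain ⟨k, hk⟩ := ih hl'
      refine ⟨k + 1, ?_⟩
      simp only [List.map_cons, List.sum_cons, List.take_succ_cons]
      have : a - t + t = a := by omega
      calc a - t + (l.map (fun x => x - t)).sum + (k + 1) * t
          = (a - t + t) + ((l.map (fun x => x - t)).sum + k * t) := by ring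
        _ = a + ((l.map (fun x => x - t)).sum + k * t) := by rw [this]
        _ ≤ a + (l.take k).sum := Nat.add_le_add_left hk a

/-- Lemma B' : for each `t` there is `k` with `fsub X t + k*t ≤ sk X k`. -/
lemma exists_k (X : Multiset ℕ) (t : ℕ) : ∃ k, fsub X t + k * t ≤ sk X k := by
  obtain ⟨k, hk⟩ := exists_k_list (X.sort (· ≥ ·)) (Multiset.pairwise_sort (s := X) (r := (· ≥ ·))) t
  exact ⟨k, by rw [fsub_eq, sk]; exact hk⟩

lemma exists_t_list (l : List ℕ) (hl : l.Pairwise (· ≥ ·)) (k : ℕ) :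
    ∃ t, (t = 0 ∨ t ∈ l) ∧ (l.map (fun x => x - t)).sum + k * t ≤ (l.take k).sum := by
  induction l generalizing k with
  | nil => exact ⟨0, Or.inl rfl, by simp⟩
  | cons a l ih =>
    rcases List.pairwise_cons.mp hl with ⟨ha, hl'⟩
    match k with
    | 0 =>
      refine ⟨a, Or.inr (List.mem_cons_self), ?_⟩
      have hz : ((a :: l).map (fun x => x - a)).sum = 0 := by
        apply List.sum_eq_zero
        intro x hx
        obtain ⟨y, hy, rfl⟩ := List.mem_map.mp hx
        rcases List.mem_cons.mp hy with rfl | hy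
        · omega
        · have := ha y hy; omega
      rw [hz]
      simp
    | k + 1 =>
      obtain ⟨t, ht, hle⟩ := ih hl' k
      have hta : t ≤ a := by
        rcases ht with rfl | h
        · omega
        · exact ha t h
      refine ⟨t, ?_, ?_⟩
      · rcases ht with rfl | h
        · exact Or.inl rfl
        · exact Or.inr (List.mem_cons_of_mem a h)
      · simp only [List.map_cons, List.sum_cons, List.take_succ_cons]
        have h1 : a - t + t = a := by omega
        calc a - t + (l.map (fun x => x - t)).sum + (k + 1) * t
            = (a - t + t) + ((l.map (fun x => x - t)).sum + k * t) := by ring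
          _ = a + ((l.map (fun x => x - t)).sum + k * t) := by rw [h1]
          _ ≤ a + (l.take k).sum := Nat.add_le_add_left hle a

/-- Lemma B : for each `k` there is `t` with `fsub X t + k*t ≤ sk X k`. -/
lemma exists_t (X : Multiset ℕ) (k : ℕ) : ∃ t, fsub X t + k * t ≤ sk X k := by
  obtain ⟨t, _, hk⟩ := exists_t_list (X.sort (· ≥ ·)) (Multiset.pairwise_sort (s := X) (r := (· ≥ ·))) k
  exact ⟨t, by rw [fsub_eq, sk]; exact hk⟩

lemma sk_iff_fsub (X Y : Multiset ℕ) :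
    (∀ k, sk Y k ≤ sk X k) ↔ (∀ t, fsub Y t ≤ fsub X t) := by
  constructor
  · intro h t
    obtain ⟨k, hk⟩ := exists_k Y t
    have h2 := (hk.trans (h k)).trans (sk_le_fsub X k t)
    omega
  · intro h k
    obtain ⟨t, ht⟩ := exists_t X k
    exact (sk_le_fsub Y k t).trans ((Nat.add_le_add_right (h t) _).trans ht)

lemma fsub_add (X Z : Multiset ℕ) (t : ℕ) :
    fsub (X + Z) t = fsub X t + fsub Z t := by
  simp [fsub]

/-- For finite multisets `X, Y, Z` of non-negative integers with
`s(X) = s(Y)`, `X` majorizes `Y` if and only if `X ∪ Z` majorizes `Y ∪ Z`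
(multiset union adding multiplicities). -/
theorem majorizes_iff_add (X Y Z : Multiset ℕ) (hs : X.sum = Y.sum) :
    Majorizes X Y ↔ Majorizes (X + Z) (Y + Z) := by
  constructor
  · rintro ⟨_, h⟩
    refine ⟨by simp [hs], ?_⟩
    rw [sk_iff_fsub] at h ⊢
    intro t
    rw [fsub_add, fsub_add]
    exact Nat.add_le_add_right (h t) _
  · rintro ⟨_, h⟩
    refine ⟨hs, ?_⟩
    rw [sk_iff_fsub] at h ⊢
    intro t
    have := h t
    rw [fsub_add, fsub_add] at this
    omega
end

section
/- Let X and Y be finite multisets of non-negative integers with s(Y) = s(X) − 1. Let x_i (respectively y_i) denote the i-th largest element of X (respectively Y), with x_i = 0 for i > |X| and y_i = 0 for i > |Y|. Assume that s_k(X) ≥ s_k(Y) ≥ s_k(X) − 1 for all k, and that there exists an index m such that s_k(X) = s_k(Y) for all k = 1, 2, …, m−1. Then x_m > 0, and Y majorizes the multiset obtained from X by removing one copy of x_m and adding one copy of x_m − 1. -/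
/-- `nthLargest X i` is the `i`-th largest element of the multiset `X`
(indexed from `i = 1`), padded by `0` for `i > |X|`. -/
def nthLargest (X : Multiset ℕ) (i : ℕ) : ℕ := (X.sort (· ≥ ·)).getD (i - 1) 0

lemma sk_succ (X : Multiset ℕ) (k : ℕ) :
    sk X (k + 1) = sk X k + nthLargest X (k + 1) := by
  unfold sk nthLargest
  rw [List.take_succ, List.sum_append]
  congr 1
  simp only [Nat.add_sub_cancel, List.getD_eq_getElem?_getD]
  rcases h : (X.sort (· ≥ ·))[k]? with _ | a <;> simp [h]

lemma nthLargest_le (X : Multiset ℕ) {i j : ℕ} (h : i ≤ j) :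
    nthLargest X j ≤ nthLargest X i := by
  unfold nthLargest
  set l := X.sort (· ≥ ·) with hl
  by_cases hj : j - 1 < l.length
  · have hi : i - 1 < l.length := lt_of_le_of_lt (by omega) hj
    rw [List.getD_eq_getElem _ _ hj, List.getD_eq_getElem _ _ hi]
    rcases Nat.lt_or_ge (i-1) (j-1) with hlt | hge
    · exact (List.pairwise_iff_getElem.mp (Multiset.pairwise_sort X _)) _ _ hi hj hlt
    · have : i - 1 = j - 1 := by omega
      simp [this]
  · rw [List.getD_eq_default _ _ (by omega)]
    exact Nat.zero_le _

lemma sk_le_sum (X : Multiset ℕ) (k : ℕ) : sk X k ≤ X.sum := by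
  conv_rhs => rw [← Multiset.sort_eq X (· ≥ ·), Multiset.sum_coe,
    ← List.take_append_drop k (X.sort (· ≥ ·)), List.sum_append]
  exact Nat.le_add_right _ _

lemma sk_eq_sum (X : Multiset ℕ) (k : ℕ) (h : Multiset.card X ≤ k) : sk X k = X.sum := by
  unfold sk
  rw [List.take_of_length_le (by rw [Multiset.length_sort]; exact h)]
  conv_rhs => rw [← Multiset.sort_eq X (· ≥ ·), Multiset.sum_coe]

/-- Let `X, Y` be finite multisets of non-negative integers with
`s(Y) = s(X) - 1`. Assume `s_k(X) ≥ s_k(Y) ≥ s_k(X) - 1` for all `k`, and that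
`s_k(X) = s_k(Y)` for `k = 1, …, m-1`. Then the `m`-th largest element `x_m`
of `X` is positive, and `Y` majorizes the multiset obtained from `X` by
replacing one copy of `x_m` with `x_m - 1`. -/
theorem majorizes_of_decrease (X Y : Multiset ℕ) (m : ℕ) (hm : 1 ≤ m)
    (hsum : X.sum = Y.sum + 1)
    (hup : ∀ k, sk Y k ≤ sk X k)
    (hdown : ∀ k, sk X k ≤ sk Y k + 1)
    (heq : ∀ k, k ≤ m - 1 → sk X k = sk Y k) :
    0 < nthLargest X m ∧
      Majorizes Y ((nthLargest X m - 1) ::ₘ X.erase (nthLargest X m)) := by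
  -- Step 1: x_m > 0
  have hxm : 0 < nthLargest X m := by
    by_contra h
    push_neg at h
    have hx0 : nthLargest X m = 0 := Nat.le_zero.mp h
    have hstab : ∀ k, sk X (m - 1 + k) = sk X (m - 1) := by
      intro k; induction k with
      | zero => rfl
      | succ n ih =>
        have h0 : nthLargest X (m - 1 + n + 1) = 0 :=
          Nat.le_zero.mp (hx0 ▸ nthLargest_le X (by omega))
        have := sk_succ X (m - 1 + n)
        rw [← Nat.add_assoc] at *
        omega
    have h1 := hstab (Multiset.card X)
    have h2 : sk X (m - 1 + Multiset.card X) = X.sum := sk_eq_sum X _ (by omega)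
    have h3 := heq (m - 1) le_rfl
    have h4 := sk_le_sum Y (m - 1)
    omega
  refine ⟨hxm, ?_⟩
  set c := nthLargest X m with hc
  set l := X.sort (· ≥ ·) with hl
  have hml : m - 1 < l.length := by
    by_contra h
    push_neg at h
    have : c = 0 := by rw [hc]; unfold nthLargest; exact List.getD_eq_default _ _ h
    omega
  -- Step 2: j, the last index with x_j = c
  set j := Nat.findGreatest (fun i => nthLargest X i = c) l.length with hj
  have hmj : m ≤ j := Nat.le_findGreatest (by omega) rfl
  have hPj : nthLargest X j = c := Nat.findGreatest_spec (P := fun i => nthLargest X i = c) (by omega) rfl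
  have hjn : j ≤ l.length := Nat.findGreatest_le _
  have hgt : ∀ k, j < k → nthLargest X k ≤ c - 1 := by
    intro k hk
    by_cases hkn : k ≤ l.length
    · have hne := Nat.findGreatest_is_greatest (P := fun i => nthLargest X i = c) hk hkn
      have hle : nthLargest X k ≤ c := hc ▸ nthLargest_le X (by omega)
      omega
    · have h0 : nthLargest X k = 0 := by
        unfold nthLargest; exact List.getD_eq_default _ _ (by rw [← hl]; omega)
      omega
  have hconst : ∀ k, m ≤ k → k ≤ j → nthLargest X k = c := fun k h1 h2 =>
    le_antisymm (hc ▸ nthLargest_le X h1) (hPj ▸ nthLargest_le X h2)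
  -- Step 3: partial sums agree below j
  have deq : ∀ k, k < j → sk X k = sk Y k := by
    intro k
    induction k with
    | zero => intro _; rfl
    | succ n ihn =>
      intro hkj
      by_cases hkm : n + 1 ≤ m - 1
      · exact heq _ hkm
      · push_neg at hkm
        have ihk := ihn (by omega)
        by_contra hne
        have hXk : sk X (n + 1) = sk Y (n + 1) + 1 := by
          have := hup (n + 1); have := hdown (n + 1); omega
        have e1 := sk_succ X n
        have e2 := sk_succ Y n
        have hxk : nthLargest X (n + 1) = c := hconst (n + 1) (by omega) (by omega)
        have hxk1 : nthLargest X (n + 1 + 1) = c := hconst (n + 1 + 1) (by omega) (by omega)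
        have hyk1 : nthLargest Y (n + 1 + 1) ≤ nthLargest Y (n + 1) := nthLargest_le Y (by omega)
        have e3 := sk_succ X (n + 1)
        have e4 := sk_succ Y (n + 1)
        have e5 := hdown (n + 1 + 1)
        omega
  -- Step 4: list decomposition
  have hj1 : j - 1 < l.length := by omega
  have hcj : l[j - 1] = c := by
    rw [← hPj]; unfold nthLargest; rw [List.getD_eq_getElem _ _ hj1]
  set A := l.take (j - 1) with hA
  set B := l.drop j with hB
  have lenA : A.length = j - 1 := by rw [hA, List.length_take]; omega
  have hdecomp : l = A ++ c :: B := by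
    conv_lhs => rw [← List.take_append_drop (j - 1) l]
    rw [List.drop_eq_getElem_cons hj1, hcj, Nat.sub_add_cancel (by omega : 1 ≤ j)]
  have hBle : ∀ b ∈ B, b ≤ c - 1 := by
    intro b hb
    obtain ⟨i, hi, hbi⟩ := List.mem_iff_getElem.mp hb
    have hlen : j + i < l.length := by
      rw [hB, List.length_drop] at hi; omega
    have : b = nthLargest X (j + i + 1) := by
      unfold nthLargest
      rw [Nat.add_sub_cancel, List.getD_eq_getElem _ _ hlen, ← hbi]
      exact List.getElem_drop ..
    rw [this]
    exact hgt _ (by omega)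
  -- Step 5: the sorted list of X'
  set L' := A ++ (c - 1) :: B with hL'
  have hsortl : l.Pairwise (· ≥ ·) := Multiset.pairwise_sort X _
  have hsl := hsortl
  rw [hdecomp, List.pairwise_append, List.pairwise_cons] at hsl
  obtain ⟨hpA, ⟨hcB, hpB⟩, hcross⟩ := hsl
  have hsortL' : L'.Pairwise (· ≥ ·) := by
    rw [hL', List.pairwise_append, List.pairwise_cons]
    refine ⟨hpA, ⟨fun b hb => by have := hBle b hb; omega, hpB⟩, ?_⟩
    intro a ha b hb
    rcases List.mem_cons.mp hb with rfl | hb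
    · have := hcross a ha c List.mem_cons_self; omega
    · exact hcross a ha b (List.mem_cons_of_mem _ hb)
  have hcX : c ∈ X := by
    rw [← Multiset.mem_sort (r := (· ≥ ·)), ← hl, ← hcj]
    exact List.getElem_mem hj1
  have hX'coe : ((c - 1) ::ₘ X.erase c) = (↑L' : Multiset ℕ) := by
    have hX : X = c ::ₘ (↑(A ++ B) : Multiset ℕ) := by
      have h1 : X = (↑l : Multiset ℕ) := (Multiset.sort_eq _ _).symm
      rw [h1, hdecomp, Multiset.cons_coe]
      exact Multiset.coe_eq_coe.mpr List.perm_middle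
    rw [hX, Multiset.erase_cons_head, Multiset.cons_coe]
    exact Multiset.coe_eq_coe.mpr List.perm_middle.symm
  have hsortX' : ((c - 1) ::ₘ X.erase c).sort (· ≥ ·) = L' := by
    apply List.Perm.eq_of_pairwise' (Multiset.pairwise_sort _ _) hsortL'
    rw [← Multiset.coe_eq_coe, Multiset.sort_eq, hX'coe]
  have skX' : ∀ k, sk ((c - 1) ::ₘ X.erase c) k = (L'.take k).sum := by
    intro k; unfold sk; rw [hsortX']
  -- Step 6: compare partial sums
  have hclow : ∀ k, k < j → sk ((c - 1) ::ₘ X.erase c) k = sk X k := by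
    intro k hk
    rw [skX', hL']
    unfold sk
    rw [← hl, hdecomp]
    rw [List.take_append_of_le_length (by omega), List.take_append_of_le_length (by omega)]
  have hchigh : ∀ k, j ≤ k → sk X k = sk ((c - 1) ::ₘ X.erase c) k + 1 := by
    intro k hk
    rw [skX', hL']
    unfold sk
    rw [← hl, hdecomp]
    rw [List.take_append, List.take_append,
      List.take_of_length_le (by omega)]
    have hk' : k - A.length = (k - j) + 1 := by omega
    rw [hk', List.take_succ_cons, List.take_succ_cons]
    simp only [List.sum_append, List.sum_cons]
    omega
  -- Step 7: conclude
  constructor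
  · -- Y.sum = X'.sum
    have hXsum : X.sum = c + (X.erase c).sum := by
      conv_lhs => rw [← Multiset.cons_erase hcX]
      rw [Multiset.sum_cons]
    rw [Multiset.sum_cons]
    omega
  · intro k
    rcases Nat.lt_or_ge k j with hk | hk
    · rw [hclow k hk, deq k hk]
    · have := hchigh k hk
      have := hdown k
      omega
end

section
/- Let P be a finite poset and let A ⊆ P be an antichain. Then the number of linear extensions satisfies e(P) ≥ ∑_{x ∈ A} e(P − x), where P − x denotes the poset P with the element x removed. -/
open Finset

section Aux

variable {β : Type*} [Fintype β] [PartialOrder β]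

/-- The type of linear extensions. -/
abbrev LinE (β : Type*) [Fintype β] [PartialOrder β] : Type _ :=
  {f : β ≃ Fin (Fintype.card β) // ∀ x y : β, x < y → f x < f y}

lemma linExt_eq_card (β : Type*) [Fintype β] [PartialOrder β] :
    linExt β = Nat.card (LinE β) := rfl

/-- The set of minimal elements. -/
noncomputable def minF (β : Type*) [Fintype β] [PartialOrder β] : Finset β :=
  @Finset.filter β (fun m => ∀ y, ¬ y < m) (Classical.decPred _) Finset.univ

lemma mem_minF {m : β} : m ∈ minF β ↔ ∀ y : β, ¬ y < m := by
  classical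
  simp [minF]

omit [PartialOrder β] in
lemma card_del_add_one (m : β) [DecidableEq β] :
    Fintype.card {y : β // y ≠ m} + 1 = Fintype.card β := by
  rw [← Fintype.card_option]
  exact Fintype.card_congr (Equiv.optionSubtypeNe m)

variable [DecidableEq β]

section Ins

variable (hn : 0 < Fintype.card β) (m : β) (G : LinE {y : β // y ≠ m})

/-- insertion of `m` at the bottom: forward function. -/
noncomputable def insFun : β → Fin (Fintype.card β) := fun y =>
  if h : y = m then ⟨0, hn⟩
  else ⟨(G.1 ⟨y, h⟩ : ℕ) + 1, by
    have h1 := (G.1 ⟨y, h⟩).isLt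
    have h2 := card_del_add_one m
    omega⟩

/-- insertion of `m` at the bottom: inverse function. -/
noncomputable def insInv (m : β) (G : LinE {y : β // y ≠ m}) : Fin (Fintype.card β) → β := fun j =>
  if h : (j : ℕ) = 0 then m
  else (G.1.symm ⟨(j : ℕ) - 1, by
    have h1 := j.isLt
    have h2 := card_del_add_one m
    omega⟩ : {y : β // y ≠ m}).1

lemma insFun_m : insFun hn m G m = ⟨0, hn⟩ := dif_pos rfl

lemma insFun_ne {y : β} (h : y ≠ m) : (insFun hn m G y : ℕ) = (G.1 ⟨y, h⟩ : ℕ) + 1 := by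
  rw [insFun, dif_neg h]

lemma insFun_val (y : {y : β // y ≠ m}) :
    (insFun hn m G ↑y : ℕ) = (G.1 y : ℕ) + 1 := by
  rw [insFun_ne hn m G y.2]

noncomputable def insEquiv : β ≃ Fin (Fintype.card β) where
  toFun := insFun hn m G
  invFun := insInv m G
  left_inv := by
    intro y
    by_cases h : y = m
    · rw [h, insFun_m]
      simp [insInv]
    · rw [insFun, dif_neg h]
      simp only [insInv]
      rw [dif_neg (Nat.succ_ne_zero _)]
      have h1 : (⟨((G.1 ⟨y, h⟩ : ℕ) + 1) - 1, by have := (G.1 ⟨y, h⟩).isLt; omega⟩ :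
          Fin (Fintype.card {y : β // y ≠ m})) = G.1 ⟨y, h⟩ := Fin.ext (by
        show ((G.1 ⟨y, h⟩ : ℕ) + 1) - 1 = _
        omega)
      rw [h1, G.1.symm_apply_apply]
  right_inv := by
    intro j
    by_cases h : (j : ℕ) = 0
    · simp only [insInv]
      rw [dif_pos h, insFun_m]
      exact Fin.ext h.symm
    · simp only [insInv]
      rw [dif_neg h]
      set z := G.1.symm ⟨(j : ℕ) - 1, by have := j.isLt; have := card_del_add_one (β := β) m; omega⟩
      apply Fin.ext
      rw [insFun_ne hn m G z.2]
      have h2 : (⟨(z : β), z.2⟩ : {y : β // y ≠ m}) = z := Subtype.ext rfl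
      rw [h2]
      show (G.1 (G.1.symm _) : ℕ) + 1 = (j : ℕ)
      rw [G.1.apply_symm_apply]
      show ((j : ℕ) - 1) + 1 = (j : ℕ)
      omega

lemma insEquiv_mono (hm : ∀ y : β, ¬ y < m) :
    ∀ x y : β, x < y → insEquiv hn m G x < insEquiv hn m G y := by
  intro x y hxy
  have hxy' : insFun hn m G x < insFun hn m G y := by
    by_cases hym : y = m
    · exact absurd (hym ▸ hxy) (hm x)
    · by_cases hxm : x = m
      · rw [Fin.lt_def, insFun_ne hn m G hym]
        rw [hxm, insFun_m]
        show 0 < _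
        omega
      · rw [Fin.lt_def, insFun_ne hn m G hym, insFun_ne hn m G hxm]
        have := G.2 ⟨x, hxm⟩ ⟨y, hym⟩ (Subtype.mk_lt_mk.mpr hxy)
        rw [Fin.lt_def] at this
        omega
  exact hxy'

/-- Insertion of a minimal element at the bottom, as a linear extension. -/
noncomputable def insLE (hm : ∀ y : β, ¬ y < m) : LinE β :=
  ⟨insEquiv hn m G, insEquiv_mono hn m G hm⟩

lemma insLE_symm_zero (hm : ∀ y : β, ¬ y < m) : (insLE hn m G hm).1.symm ⟨0, hn⟩ = m := by
  rw [Equiv.symm_apply_eq]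
  exact (insFun_m hn m G).symm

end Ins

/-- The fiber of linear extensions with bottom element `m` is equivalent to the
linear extensions of the complement of `m`. -/
noncomputable def fiberEquiv (hn : 0 < Fintype.card β) (m : β) (hm : ∀ y : β, ¬ y < m) :
    {F : LinE β // F.1.symm ⟨0, hn⟩ = m} ≃ LinE {y : β // y ≠ m} where
  toFun F := by
    have hf0 : F.1.1 m = ⟨0, hn⟩ := by
      conv_rhs => rw [← F.1.1.apply_symm_apply ⟨0, hn⟩]
      rw [F.2]
    have hne : ∀ y : {y : β // y ≠ m}, (F.1.1 ↑y : ℕ) ≠ 0 := by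
      intro y h
      exact y.2 (F.1.1.injective ((Fin.ext h).trans hf0.symm))
    refine ⟨⟨fun y => ⟨(F.1.1 ↑y : ℕ) - 1, by
        have h1 := (F.1.1 ↑y).isLt
        have h2 := card_del_add_one (β := β) m
        have h3 := hne y
        omega⟩,
      fun j => ⟨F.1.1.symm ⟨(j : ℕ) + 1, by
        have h1 := j.isLt
        have h2 := card_del_add_one (β := β) m
        omega⟩, ?_⟩, ?_, ?_⟩, ?_⟩
    · intro h
      have h2 := congrArg F.1.1 h
      rw [Equiv.apply_symm_apply, hf0] at h2
      exact Nat.succ_ne_zero _ (congrArg Fin.val h2)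
    · intro y
      apply Subtype.ext
      have h1 : (⟨((F.1.1 ↑y : ℕ) - 1) + 1, by
          have := (F.1.1 ↑y).isLt
          have := hne y
          omega⟩ : Fin (Fintype.card β)) = F.1.1 ↑y := Fin.ext (by
        show ((F.1.1 ↑y : ℕ) - 1) + 1 = _
        have := hne y
        omega)
      show (F.1.1.symm _ : β) = ↑y
      rw [h1, F.1.1.symm_apply_apply]
    · intro j
      apply Fin.ext
      show (F.1.1 (F.1.1.symm _) : ℕ) - 1 = (j : ℕ)
      rw [F.1.1.apply_symm_apply]
      simp
    · intro y z hyz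
      have h := F.1.2 ↑y ↑z (Subtype.coe_lt_coe.mpr hyz)
      have h1 := hne y
      have h2 := hne z
      rw [Fin.lt_def] at h ⊢
      show (F.1.1 ↑y : ℕ) - 1 < (F.1.1 ↑z : ℕ) - 1
      omega
  invFun G := ⟨insLE hn m G hm, insLE_symm_zero hn m G hm⟩
  left_inv := by
    rintro ⟨F, hF⟩
    have hf0 : F.1 m = ⟨0, hn⟩ := by
      conv_rhs => rw [← F.1.apply_symm_apply ⟨0, hn⟩]
      rw [hF]
    apply Subtype.ext
    apply Subtype.ext
    apply Equiv.ext
    intro y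
    show insFun hn m _ y = F.1 y
    by_cases h : y = m
    · rw [h, insFun_m, hf0]
    · rw [insFun, dif_neg h]
      apply Fin.ext
      show ((F.1 y : ℕ) - 1) + 1 = (F.1 y : ℕ)
      have : (F.1 y : ℕ) ≠ 0 := by
        intro h0
        exact h (F.1.injective ((Fin.ext h0).trans hf0.symm))
      omega
  right_inv := by
    intro G
    apply Subtype.ext
    apply Equiv.ext
    intro y
    apply Fin.ext
    show ((insLE hn m G hm).1 ↑y : ℕ) - 1 = (G.1 y : ℕ)
    have h1 : ((insLE hn m G hm).1 ↑y : ℕ) = (G.1 y : ℕ) + 1 := insFun_val hn m G y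
    omega

end Aux
section B
variable {β : Type*} [Fintype β] [PartialOrder β] [DecidableEq β]

/-- Decomposition of linear extensions by their bottom element. -/
lemma linExt_eq_sum_min (β : Type*) [Fintype β] [PartialOrder β] [DecidableEq β] [Nonempty β] :
    linExt β = ∑ m ∈ minF β, linExt {y : β // y ≠ m} := by
  classical
  have hn : 0 < Fintype.card β := Fintype.card_pos
  letI : Fintype (LinE β) := Fintype.ofFinite _
  rw [linExt_eq_card, Nat.card_eq_fintype_card, ← Finset.card_univ]
  rw [Finset.card_eq_sum_card_fiberwise
    (f := fun F : LinE β => F.1.symm ⟨0, hn⟩) (t := minF β)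
    (fun F _ => by
      rw [Finset.mem_coe, mem_minF]
      intro y hy
      have h2 := F.2 y _ hy
      rw [Equiv.apply_symm_apply] at h2
      rw [Fin.lt_def] at h2
      simp at h2)]
  refine Finset.sum_congr rfl fun m hm => ?_
  have hmm : ∀ y : β, ¬ y < m := mem_minF.mp hm
  have h1 : (univ.filter fun F : LinE β => F.1.symm ⟨0, hn⟩ = m).card
      = Fintype.card {F : LinE β // F.1.symm ⟨0, hn⟩ = m} := (Fintype.card_subtype _).symm
  rw [h1, ← Nat.card_eq_fintype_card, Nat.card_congr (fiberEquiv hn m hmm), ← linExt_eq_card]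

/-- Invariance of the number of linear extensions under order-isomorphism. -/
lemma linExt_congr {β γ : Type*} [Fintype β] [PartialOrder β] [Fintype γ] [PartialOrder γ]
    (e : β ≃ γ) (he : ∀ x y : β, x < y ↔ e x < e y) : linExt β = linExt γ := by
  have hc : Fintype.card β = Fintype.card γ := Fintype.card_congr e
  rw [linExt_eq_card, linExt_eq_card]
  apply Nat.card_congr
  refine ⟨fun F => ⟨(e.symm.trans F.1).trans (finCongr hc), fun x y hxy => ?_⟩,
      fun G => ⟨(e.trans G.1).trans (finCongr hc.symm), fun x y hxy => ?_⟩,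
      fun F => Subtype.ext (Equiv.ext fun y => ?_), fun G => Subtype.ext (Equiv.ext fun y => ?_)⟩
  · have h2 : e.symm x < e.symm y := by
      rw [he (e.symm x) (e.symm y)]
      simpa using hxy
    have h3 := F.2 _ _ h2
    rw [Fin.lt_def]
    simp only [Equiv.trans_apply, finCongr_apply, Fin.coe_cast]
    rw [← Fin.lt_def]
    exact h3
  · have h3 := G.2 _ _ ((he x y).mp hxy)
    rw [Fin.lt_def]
    simp only [Equiv.trans_apply, finCongr_apply, Fin.coe_cast]
    rw [← Fin.lt_def]
    exact h3
  · apply Fin.ext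
    simp only [Equiv.trans_apply, finCongr_apply, Fin.coe_cast, Equiv.symm_apply_apply]
  · apply Fin.ext
    simp only [Equiv.trans_apply, finCongr_apply, Fin.coe_cast, Equiv.apply_symm_apply]

/-- Removing two elements, one at a time, gives the doubly-punctured subtype. -/
lemma linExt_del_del (a : β) (b : {y : β // y ≠ a}) :
    linExt {z : {y : β // y ≠ a} // z ≠ b} = linExt {y : β // y ≠ a ∧ y ≠ ↑b} := by
  refine linExt_congr ⟨fun z => ⟨z.1.1, z.1.2, fun h => z.2 (Subtype.ext h)⟩,
      fun y => ⟨⟨y.1, y.2.1⟩, fun h => y.2.2 (congrArg Subtype.val h)⟩,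
      fun z => Subtype.ext (Subtype.ext rfl), fun y => Subtype.ext rfl⟩ (fun _ _ => Iff.rfl)

/-- Symmetry of double deletion. -/
lemma linExt_pair_sym (a b : β) :
    linExt {y : β // y ≠ a ∧ y ≠ b} = linExt {y : β // y ≠ b ∧ y ≠ a} :=
  linExt_congr ⟨fun y => ⟨y.1, y.2.2, y.2.1⟩, fun y => ⟨y.1, y.2.2, y.2.1⟩,
    fun y => Subtype.ext rfl, fun y => Subtype.ext rfl⟩ (fun _ _ => Iff.rfl)

lemma sum_subtype_eq {p : β → Prop} [DecidablePred p] (s : Finset β) (h : β → ℕ) :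
    ∑ z ∈ s.subtype p, h ↑z = ∑ x ∈ s.filter p, h x := by
  rw [← Finset.subtype_map, Finset.sum_map]
  simp [Function.Embedding.coe_subtype]

/-- Minimal elements of the subtype, when deleting a non-minimal element. -/
lemma minF_del_eq (a : β) (ha : ∃ w : β, w < a) :
    minF {y : β // y ≠ a} = (minF β).subtype (fun y => y ≠ a) := by
  ext z
  rw [Finset.mem_subtype, mem_minF, mem_minF]
  constructor
  · intro hz y hy
    by_cases hya : y = a
    · obtain ⟨w, hw⟩ := ha
      exact hz ⟨w, fun h => lt_irrefl a (h ▸ hw)⟩ (Subtype.mk_lt_mk.mpr (lt_trans hw (hya ▸ hy)))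
    · exact hz ⟨y, hya⟩ (Subtype.mk_lt_mk.mpr hy)
  · intro hz y hy
    exact hz ↑y (Subtype.coe_lt_coe.mpr hy)

/-- Antichains restrict to subtypes. -/
lemma antichain_subtype {B : Finset β} (hB : IsAntichain (· ≤ ·) (B : Set β))
    (p : β → Prop) [DecidablePred p] :
    IsAntichain (· ≤ ·) ((B.subtype p : Finset (Subtype p)) : Set (Subtype p)) := by
  intro x hx y hy hxy hle
  rw [Finset.mem_coe, Finset.mem_subtype] at hx hy
  exact hB hx hy (fun h => hxy (Subtype.ext h)) hle

end B
section C
variable {β : Type*}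

/-- The main theorem follows from the key claim, for a given poset. -/
lemma thm_of_claim (β : Type*) [Fintype β] [PartialOrder β] [DecidableEq β] (B : Finset β)
    (hcl : ∑ b ∈ B.filter (fun b => b ∉ minF β), linExt {y : β // y ≠ b}
        ≤ ∑ m ∈ (minF β) \ B, linExt {y : β // y ≠ m}) :
    ∑ b ∈ B, linExt {y : β // y ≠ b} ≤ linExt β := by
  classical
  rcases B.eq_empty_or_nonempty with h | h
  · simp [h]
  · have : Nonempty β := ⟨h.choose⟩
    rw [linExt_eq_sum_min β]
    calc ∑ b ∈ B, linExt {y : β // y ≠ b}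
        = ∑ b ∈ B.filter (fun b => b ∈ minF β), linExt {y : β // y ≠ b}
          + ∑ b ∈ B.filter (fun b => b ∉ minF β), linExt {y : β // y ≠ b} :=
          (Finset.sum_filter_add_sum_filter_not _ _ _).symm
      _ ≤ ∑ b ∈ B.filter (fun b => b ∈ minF β), linExt {y : β // y ≠ b}
          + ∑ m ∈ (minF β) \ B, linExt {y : β // y ≠ m} := Nat.add_le_add_left hcl _
      _ = ∑ m ∈ minF β, linExt {y : β // y ≠ m} := by
          rw [Finset.filter_mem_eq_inter, Finset.inter_comm]
          exact Finset.sum_inter_add_sum_sdiff _ _ _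

/-- The key claim: for an antichain `B`,
`∑_{b ∈ B non-minimal} e(β-b) ≤ ∑_{m minimal, m ∉ B} e(β-m)`. -/
lemma claim_all : ∀ (n : ℕ) (β : Type u) [Fintype β] [PartialOrder β] [DecidableEq β]
    (B : Finset β), Fintype.card β = n → IsAntichain (· ≤ ·) (B : Set β) →
    ∑ b ∈ B.filter (fun b => b ∉ minF β), linExt {y : β // y ≠ b}
      ≤ ∑ m ∈ (minF β) \ B, linExt {y : β // y ≠ m} := by
  intro n
  induction n using Nat.strong_induction_on with
  | _ n IH =>
  intro β _ _ _ B hcard hB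
  classical
  set M := minF β with hM
  set A2 := B.filter (fun b => b ∉ M) with hA2d
  rcases A2.eq_empty_or_nonempty with hA2 | hA2
  · rw [hA2]
    simp
  · obtain ⟨a₀, ha₀⟩ := hA2
    have ha₀B : a₀ ∈ B := (Finset.mem_filter.mp ha₀).1
    have ha₀m : a₀ ∉ M := (Finset.mem_filter.mp ha₀).2
    -- elements of A2 are non-minimal hence have something below
    have hwit : ∀ a ∈ A2, ∃ w, w < a := by
      intro a ha
      have h2 := (Finset.mem_filter.mp ha).2
      rw [hM, mem_minF] at h2
      push_neg at h2
      obtain ⟨y, hy⟩ := h2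
      exact ⟨y, hy⟩
    have hA2M : ∀ a ∈ A2, a ∉ M := fun a ha => (Finset.mem_filter.mp ha).2
    have hA2B : ∀ a ∈ A2, a ∈ B := fun a ha => (Finset.mem_filter.mp ha).1
    -- cardinality of punctured posets
    have hcard' : ∀ a : β, Fintype.card {y : β // y ≠ a} < n := by
      intro a
      have := card_del_add_one (β := β) a
      omega
    -- Step A : expansion of each non-minimal term over minimal elements
    have stepA : ∀ a ∈ A2, linExt {y : β // y ≠ a}
        = ∑ m ∈ M, linExt {y : β // y ≠ m ∧ y ≠ a} := by
      intro a ha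
      obtain ⟨w, hw⟩ := hwit a ha
      have : Nonempty {y : β // y ≠ a} := ⟨⟨w, ne_of_lt hw⟩⟩
      rw [linExt_eq_sum_min {y : β // y ≠ a}, minF_del_eq a ⟨w, hw⟩]
      rw [Finset.sum_congr rfl (fun z _ => (linExt_del_del a z).trans
        (linExt_pair_sym a ↑z))]
      rw [sum_subtype_eq M (fun x => linExt {y : β // y ≠ x ∧ y ≠ a})]
      rw [Finset.filter_ne', Finset.erase_eq_of_notMem (hA2M a ha)]
    -- Step B : bound for minimal elements not in B
    have stepB : ∀ m ∈ M \ B,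
        (∑ a ∈ A2, linExt {y : β // y ≠ m ∧ y ≠ a})
          + ∑ c ∈ M ∩ B, linExt {y : β // y ≠ m ∧ y ≠ c}
          ≤ linExt {y : β // y ≠ m} := by
      intro m hm
      have hmM : m ∈ M := (Finset.mem_sdiff.mp hm).1
      have hmB : m ∉ B := (Finset.mem_sdiff.mp hm).2
      have hsub : ∑ b ∈ B, linExt {y : β // y ≠ m ∧ y ≠ b} ≤ linExt {y : β // y ≠ m} := by
        have hIH := IH _ (hcard' m) {y : β // y ≠ m}
          (B.subtype (fun y => y ≠ m)) rfl (antichain_subtype hB _)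
        have h3 := thm_of_claim {y : β // y ≠ m} (B.subtype (fun y => y ≠ m)) hIH
        rw [Finset.sum_congr rfl (fun z _ => linExt_del_del m z)] at h3
        rw [sum_subtype_eq B (fun x => linExt {y : β // y ≠ m ∧ y ≠ x})] at h3
        rwa [Finset.filter_ne', Finset.erase_eq_of_notMem hmB] at h3
      calc (∑ a ∈ A2, linExt {y : β // y ≠ m ∧ y ≠ a})
            + ∑ c ∈ M ∩ B, linExt {y : β // y ≠ m ∧ y ≠ c}
          = ∑ b ∈ B, linExt {y : β // y ≠ m ∧ y ≠ b} := by
            have h4 : B.filter (fun b => ¬ b ∉ M) = M ∩ B := by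
              ext b
              simp only [Finset.mem_filter, Finset.mem_inter, not_not]
              exact ⟨fun h => ⟨h.2, h.1⟩, fun h => ⟨h.2, h.1⟩⟩
            rw [← Finset.sum_filter_add_sum_filter_not B (fun b => b ∉ M)
              (fun b => linExt {y : β // y ≠ m ∧ y ≠ b}), h4, ← hA2d]
        _ ≤ linExt {y : β // y ≠ m} := hsub
    -- Step C : bound for minimal elements in B
    have stepC : ∀ c ∈ M ∩ B,
        ∑ a ∈ A2, linExt {y : β // y ≠ c ∧ y ≠ a}
          ≤ ∑ m ∈ M \ B, linExt {y : β // y ≠ c ∧ y ≠ m} := by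
      intro c hc
      have hcM : c ∈ M := (Finset.mem_inter.mp hc).1
      have hcB : c ∈ B := (Finset.mem_inter.mp hc).2
      have hca₀ : a₀ ≠ c := fun h => ha₀m (h ▸ hcM)
      have hQne : Nonempty {y : β // y ≠ c} := ⟨⟨a₀, hca₀⟩⟩
      -- the enlarged antichain in the punctured poset
      have hnew : ∀ z : {y : β // y ≠ c},
          z ∈ (minF {y : β // y ≠ c}).filter (fun u : {y : β // y ≠ c} => (u : β) ∉ M) →
          c < (z : β) ∧ ∀ w : β, w < (z : β) → w = c := by
        intro z hz
        rw [Finset.mem_filter, mem_minF] at hz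
        have h2 : ∀ w : β, w < (z : β) → w = c := by
          intro w hw
          by_contra hwc
          exact hz.1 ⟨w, hwc⟩ (Subtype.mk_lt_mk.mpr hw)
        have h3 := hz.2
        rw [hM, mem_minF] at h3
        push_neg at h3
        obtain ⟨w, hw⟩ := h3
        have hwc := h2 w hw
        subst hwc
        exact ⟨hw, h2⟩
      have hAbarAC : IsAntichain (· ≤ ·)
          (((B.subtype (fun y => y ≠ c))
            ∪ ((minF {y : β // y ≠ c}).filter (fun u : {y : β // y ≠ c} => (u : β) ∉ M)) :
              Finset {y : β // y ≠ c}) : Set {y : β // y ≠ c}) := by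
        intro x hx y hy hxy hle
        rw [Finset.mem_coe, Finset.mem_union] at hx hy
        have hlt : (x : β) < (y : β) := lt_of_le_of_ne (Subtype.coe_le_coe.mpr hle)
          (fun h => hxy (Subtype.ext h))
        rcases hx with hx | hx <;> rcases hy with hy | hy
        · rw [Finset.mem_subtype] at hx hy
          exact hB hx hy (fun h => hxy (Subtype.ext (by rw [h]))) hle
        · -- x ∈ B, y new minimal : then x < y forces x = c, impossible
          exact x.2 ((hnew y hy).2 _ hlt)
        · -- x new minimal, y ∈ B : c < x < y contradicts antichain B (c, y ∈ B)
          rw [Finset.mem_subtype] at hy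
          have hcy : c < (y : β) := lt_trans (hnew x hx).1 hlt
          exact hB hcB hy (fun h => by rw [← h] at hcy; exact lt_irrefl _ hcy) (le_of_lt hcy)
        · -- both new minimals : x < y forces x = c
          exact x.2 ((hnew y hy).2 _ hlt)
      have hIH := IH _ (hcard' c) {y : β // y ≠ c}
        ((B.subtype (fun y => y ≠ c))
          ∪ ((minF {y : β // y ≠ c}).filter (fun u : {y : β // y ≠ c} => (u : β) ∉ M))) rfl hAbarAC
      -- lower bound the LHS of hIH
      have hL : ∑ a ∈ A2, linExt {y : β // y ≠ c ∧ y ≠ a}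
          ≤ ∑ z ∈ ((B.subtype (fun y => y ≠ c))
              ∪ ((minF {y : β // y ≠ c}).filter (fun u : {y : β // y ≠ c} => (u : β) ∉ M))).filter
                (fun z => z ∉ minF {y : β // y ≠ c}),
            linExt {w : {y : β // y ≠ c} // w ≠ z} := by
        have hsubset : A2.subtype (fun y => y ≠ c)
            ⊆ ((B.subtype (fun y => y ≠ c))
              ∪ ((minF {y : β // y ≠ c}).filter (fun u : {y : β // y ≠ c} => (u : β) ∉ M))).filter
                (fun z => z ∉ minF {y : β // y ≠ c}) := by
          intro z hz
          rw [Finset.mem_subtype] at hz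
          rw [Finset.mem_filter, Finset.mem_union, Finset.mem_subtype]
          refine ⟨Or.inl (hA2B _ hz), ?_⟩
          -- z is not minimal in the punctured poset
          rw [mem_minF]
          push_neg
          obtain ⟨w, hw⟩ := hwit _ hz
          have hwc : w ≠ c := by
            intro h
            subst h
            exact hB hcB (hA2B _ hz) (fun h2 => (hA2M _ hz) (by rw [← h2]; exact hcM))
              (le_of_lt hw)
          exact ⟨⟨w, hwc⟩, Subtype.mk_lt_mk.mpr hw⟩
        have e1 : ∑ z ∈ A2.subtype (fun y => y ≠ c),
            linExt {w : {y : β // y ≠ c} // w ≠ z}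
            = ∑ a ∈ A2, linExt {y : β // y ≠ c ∧ y ≠ a} := by
          rw [Finset.sum_congr rfl (fun z _ => linExt_del_del c z),
            sum_subtype_eq A2 (fun x => linExt {y : β // y ≠ c ∧ y ≠ x})]
          apply Finset.sum_congr _ (fun x _ => rfl)
          rw [Finset.filter_true_of_mem]
          intro a ha h
          exact hA2M a ha (by rw [h]; exact hcM)
        rw [← e1]
        exact Finset.sum_le_sum_of_subset hsubset
      -- upper bound the RHS of hIH
      have hR : ∑ μ ∈ minF {y : β // y ≠ c} \ ((B.subtype (fun y => y ≠ c))
              ∪ ((minF {y : β // y ≠ c}).filter (fun u : {y : β // y ≠ c} => (u : β) ∉ M))),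
            linExt {w : {y : β // y ≠ c} // w ≠ μ}
          ≤ ∑ m ∈ M \ B, linExt {y : β // y ≠ c ∧ y ≠ m} := by
        have hsubset : minF {y : β // y ≠ c} \ ((B.subtype (fun y => y ≠ c))
              ∪ ((minF {y : β // y ≠ c}).filter (fun u : {y : β // y ≠ c} => (u : β) ∉ M)))
            ⊆ (M \ B).subtype (fun y => y ≠ c) := by
          intro z hz
          rw [Finset.mem_sdiff, Finset.mem_union, Finset.mem_subtype,
            Finset.mem_filter] at hz
          push_neg at hz
          obtain ⟨hz1, hz2, hz3⟩ := hz
          rw [Finset.mem_subtype, Finset.mem_sdiff]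
          exact ⟨hz3 hz1, hz2⟩
        calc ∑ μ ∈ minF {y : β // y ≠ c} \ ((B.subtype (fun y => y ≠ c))
              ∪ ((minF {y : β // y ≠ c}).filter (fun u : {y : β // y ≠ c} => (u : β) ∉ M))),
            linExt {w : {y : β // y ≠ c} // w ≠ μ}
            ≤ ∑ μ ∈ (M \ B).subtype (fun y => y ≠ c),
              linExt {w : {y : β // y ≠ c} // w ≠ μ} :=
              Finset.sum_le_sum_of_subset hsubset
          _ = ∑ m ∈ M \ B, linExt {y : β // y ≠ c ∧ y ≠ m} := by
              rw [Finset.sum_congr rfl (fun z _ => linExt_del_del c z)]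
              rw [sum_subtype_eq (M \ B) (fun x => linExt {y : β // y ≠ c ∧ y ≠ x})]
              rw [Finset.filter_ne', Finset.erase_eq_of_notMem
                (fun h => (Finset.mem_sdiff.mp h).2 hcB)]
      exact le_trans (le_trans hL hIH) hR
    -- Assemble everything
    calc ∑ b ∈ A2, linExt {y : β // y ≠ b}
        = ∑ a ∈ A2, ∑ m ∈ M, linExt {y : β // y ≠ m ∧ y ≠ a} :=
          Finset.sum_congr rfl stepA
      _ = ∑ m ∈ M, ∑ a ∈ A2, linExt {y : β // y ≠ m ∧ y ≠ a} := Finset.sum_comm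
      _ = (∑ m ∈ M ∩ B, ∑ a ∈ A2, linExt {y : β // y ≠ m ∧ y ≠ a})
          + ∑ m ∈ M \ B, ∑ a ∈ A2, linExt {y : β // y ≠ m ∧ y ≠ a} :=
          (Finset.sum_inter_add_sum_sdiff _ _ _).symm
      _ ≤ (∑ c ∈ M ∩ B, ∑ m ∈ M \ B, linExt {y : β // y ≠ c ∧ y ≠ m})
          + ∑ m ∈ M \ B, ∑ a ∈ A2, linExt {y : β // y ≠ m ∧ y ≠ a} :=
          Nat.add_le_add_right (Finset.sum_le_sum stepC) _
      _ = (∑ m ∈ M \ B, ∑ c ∈ M ∩ B, linExt {y : β // y ≠ m ∧ y ≠ c})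
          + ∑ m ∈ M \ B, ∑ a ∈ A2, linExt {y : β // y ≠ m ∧ y ≠ a} := by
          congr 1
          rw [Finset.sum_comm]
          exact Finset.sum_congr rfl (fun m _ => Finset.sum_congr rfl
            (fun c _ => linExt_pair_sym c m))
      _ = ∑ m ∈ M \ B, ((∑ a ∈ A2, linExt {y : β // y ≠ m ∧ y ≠ a})
          + ∑ c ∈ M ∩ B, linExt {y : β // y ≠ m ∧ y ≠ c}) := by
          rw [Nat.add_comm, ← Finset.sum_add_distrib]
      _ ≤ ∑ m ∈ M \ B, linExt {y : β // y ≠ m} := Finset.sum_le_sum stepB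

end C

/-- If `A` is an antichain in a finite poset `α`, then
`e(α) ≥ ∑_{x ∈ A} e(α - x)`, where `α - x` is the induced subposet on the
complement of `x`. -/
theorem linExt_ge_sum_antichain {α : Type*} [Fintype α] [DecidableEq α] [PartialOrder α]
    (A : Finset α) (hA : IsAntichain (· ≤ ·) (A : Set α)) :
    ∑ x ∈ A, linExt {y : α // y ≠ x} ≤ linExt α := by
  exact thm_of_claim α A (claim_all (Fintype.card α) α A rfl hA)
end

section
/- Let n be a positive integer and let a_1 ≥ a_2 ≥ … and c_1 ≥ c_2 ≥ … be two conjugate partitions of n into positive integer parts. Then ∏_i a_i! · ∏_i c_i! ≥ (n / (e·H_n))^n, where H_n = 1 + 1/2 + … + 1/n is the n-th harmonic number and e is Euler's number. -/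
private lemma aux_pow_le_factorial_mul_exp (m : ℕ) :
    (m : ℝ) ^ m ≤ (Nat.factorial m : ℝ) * Real.exp m := by
  have h := Real.pow_div_factorial_le_exp (x := (m : ℝ)) (by positivity) m
  have hf : (0 : ℝ) < Nat.factorial m := by positivity
  rw [div_le_iff₀ hf] at h
  calc (m : ℝ) ^ m ≤ Real.exp m * Nat.factorial m := h
    _ = _ := by ring

/-- **Product of factorials of conjugate partitions.**
Let `a 0 ≥ a 1 ≥ …` and `c 0 ≥ c 1 ≥ …` (both 0-indexed, padded by zeros) be
two conjugate partitions of `n ≥ 1` into positive parts, so that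
`c k = #{i : a i ≥ k+1}`. Then
`∏ i, (a i)! * ∏ i, (c i)! ≥ (n / (e * H_n))^n`,
where `H_n = 1 + 1/2 + … + 1/n`. -/
theorem conjugate_partitions_factorial_bound
    (n : ℕ) (hn : 0 < n) (a c : ℕ → ℕ)
    (ha : Antitone a)
    (hsum : ∑ i ∈ Finset.range n, a i = n)
    (hzero : ∀ i, n ≤ i → a i = 0)
    (hconj : ∀ k : ℕ, c k = Nat.card {i : ℕ | k + 1 ≤ a i}) :
    ((n : ℝ) / (Real.exp 1 * ∑ i ∈ Finset.range n, (1 : ℝ) / (i + 1))) ^ n ≤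
      (∏ i ∈ Finset.range n, (Nat.factorial (a i) : ℝ)) *
        ∏ i ∈ Finset.range n, (Nat.factorial (c i) : ℝ) := by
  set H : ℝ := ∑ i ∈ Finset.range n, (1 : ℝ) / (i + 1) with hHdef
  have hHpos : 0 < H :=
    Finset.sum_pos (fun i _ => by positivity) (Finset.nonempty_range_iff.2 hn.ne')
  have hnR : (0 : ℝ) < n := by exact_mod_cast hn
  set t : ℝ := n / H with htdef
  have htpos : 0 < t := div_pos hnR hHpos
  -- a i ≤ n
  have han : ∀ i, a i ≤ n := by
    intro i
    calc a i ≤ a 0 := ha (Nat.zero_le i)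
      _ ≤ ∑ i ∈ Finset.range n, a i :=
        Finset.single_le_sum (fun _ _ => Nat.zero_le _) (Finset.mem_range.2 hn)
      _ = n := hsum
  -- c k as a Finset card
  have hcF : ∀ k, c k = ((Finset.range n).filter (fun i => k + 1 ≤ a i)).card := by
    intro k
    rw [hconj k]
    have hset : {i : ℕ | k + 1 ≤ a i} =
        ↑((Finset.range n).filter (fun i => k + 1 ≤ a i)) := by
      ext i
      simp only [Set.mem_setOf_eq, Finset.coe_filter, Finset.mem_range]
      constructor
      · intro h
        refine ⟨?_, h⟩
        by_contra hni
        have := hzero i (le_of_not_gt hni)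
        omega
      · tauto
    rw [hset, Nat.card_coe_set_eq, Set.ncard_coe_finset]
  have hfilter : ∀ i, (Finset.range n).filter (fun k => k + 1 ≤ a i) = Finset.range (a i) := by
    intro i
    have h := han i
    ext k
    simp only [Finset.mem_filter, Finset.mem_range]
    omega
  -- product of row factorials as column-count powers
  have hprodA : (∏ i ∈ Finset.range n, Nat.factorial (a i)) =
      ∏ k ∈ Finset.range n, (k + 1) ^ c k := by
    have hterm : ∀ i ∈ Finset.range n, Nat.factorial (a i) =
        ∏ k ∈ Finset.range n, (if k + 1 ≤ a i then k + 1 else 1) := by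
      intro i _
      rw [← Finset.prod_filter, hfilter i, Finset.prod_range_add_one_eq_factorial]
    calc (∏ i ∈ Finset.range n, Nat.factorial (a i))
        = ∏ i ∈ Finset.range n, ∏ k ∈ Finset.range n,
            (if k + 1 ≤ a i then k + 1 else 1) := Finset.prod_congr rfl hterm
      _ = ∏ k ∈ Finset.range n, ∏ i ∈ Finset.range n,
            (if k + 1 ≤ a i then k + 1 else 1) := Finset.prod_comm
      _ = ∏ k ∈ Finset.range n, (k + 1) ^ c k := by
          refine Finset.prod_congr rfl fun k _ => ?_
          rw [← Finset.prod_filter, Finset.prod_const, ← hcF k]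
  -- sum of column counts is n
  have hsumc : ∑ k ∈ Finset.range n, c k = n := by
    calc ∑ k ∈ Finset.range n, c k
        = ∑ k ∈ Finset.range n, ∑ i ∈ Finset.range n,
            (if k + 1 ≤ a i then 1 else 0) := by
          refine Finset.sum_congr rfl fun k _ => ?_
          rw [hcF k, Finset.card_filter]
      _ = ∑ i ∈ Finset.range n, ∑ k ∈ Finset.range n,
            (if k + 1 ≤ a i then 1 else 0) := Finset.sum_comm
      _ = ∑ i ∈ Finset.range n, a i := by
          refine Finset.sum_congr rfl fun i _ => ?_
          rw [← Finset.sum_filter, hfilter i]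
          simp
      _ = n := hsum
  -- key pointwise bound
  have key : ∀ k ∈ Finset.range n,
      t ^ (c k) * Real.exp (-(t / ((k : ℝ) + 1))) ≤
        ((k : ℝ) + 1) ^ (c k) * (Nat.factorial (c k) : ℝ) := by
    intro k _
    rcases Nat.eq_zero_or_pos (c k) with h0 | hpos
    · rw [h0]
      simp only [pow_zero, one_mul, Nat.factorial_zero, Nat.cast_one, mul_one]
      apply Real.exp_le_one_iff.2
      have : (0 : ℝ) ≤ t / ((k : ℝ) + 1) := by positivity
      linarith
    · set m : ℕ := c k with hm
      have hmR : (0 : ℝ) < m := by exact_mod_cast hpos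
      set x : ℝ := ((k : ℝ) + 1) * m with hx
      have hxpos : 0 < x := by positivity
      have htan : t ≤ x * Real.exp (t / x - 1) := by
        have h1 : t / x ≤ Real.exp (t / x - 1) := by
          have := Real.add_one_le_exp (t / x - 1)
          linarith
        calc t = x * (t / x) := by field_simp
          _ ≤ x * Real.exp (t / x - 1) := by
            exact mul_le_mul_of_nonneg_left h1 hxpos.le
      have hpow : t ^ m ≤ x ^ m * Real.exp ((m : ℝ) * (t / x - 1)) := by
        calc t ^ m ≤ (x * Real.exp (t / x - 1)) ^ m := pow_le_pow_left₀ htpos.le htan m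
          _ = x ^ m * (Real.exp (t / x - 1)) ^ m := mul_pow _ _ _
          _ = x ^ m * Real.exp ((m : ℝ) * (t / x - 1)) := by rw [← Real.exp_nat_mul]
      have hmx : (m : ℝ) * (t / x) = t / ((k : ℝ) + 1) := by
        rw [hx]
        field_simp
      calc t ^ m * Real.exp (-(t / ((k : ℝ) + 1)))
          ≤ (x ^ m * Real.exp ((m : ℝ) * (t / x - 1))) * Real.exp (-(t / ((k : ℝ) + 1))) :=
            mul_le_mul_of_nonneg_right hpow (Real.exp_pos _).le
        _ = x ^ m * Real.exp (-(m : ℝ)) := by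
            rw [mul_assoc, ← Real.exp_add]
            congr 1
            rw [mul_sub, hmx, mul_one]
            ring
        _ = ((k : ℝ) + 1) ^ m * ((m : ℝ) ^ m * Real.exp (-(m : ℝ))) := by
            rw [hx, mul_pow]; ring
        _ ≤ ((k : ℝ) + 1) ^ m * (Nat.factorial m : ℝ) := by
            apply mul_le_mul_of_nonneg_left _ (by positivity)
            rw [Real.exp_neg, ← div_eq_mul_inv, div_le_iff₀ (Real.exp_pos _)]
            exact aux_pow_le_factorial_mul_exp m
  have hmain : ∏ k ∈ Finset.range n, (t ^ (c k) * Real.exp (-(t / ((k : ℝ) + 1)))) ≤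
      ∏ k ∈ Finset.range n, (((k : ℝ) + 1) ^ (c k) * (Nat.factorial (c k) : ℝ)) :=
    Finset.prod_le_prod (fun k _ => by positivity) key
  have hL : ∏ k ∈ Finset.range n, (t ^ (c k) * Real.exp (-(t / ((k : ℝ) + 1)))) =
      ((n : ℝ) / (Real.exp 1 * H)) ^ n := by
    rw [Finset.prod_mul_distrib, Finset.prod_pow_eq_pow_sum, hsumc, ← Real.exp_sum]
    have hs : ∑ k ∈ Finset.range n, (-(t / ((k : ℝ) + 1))) = -(n : ℝ) := by
      rw [Finset.sum_neg_distrib]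
      congr 1
      have : ∑ k ∈ Finset.range n, t / ((k : ℝ) + 1) = t * H := by
        rw [hHdef, Finset.mul_sum]
        refine Finset.sum_congr rfl fun k _ => ?_
        rw [mul_one_div]
      rw [this, htdef, div_mul_cancel₀ _ hHpos.ne']
    rw [hs]
    have hexp : Real.exp (-(n : ℝ)) = ((Real.exp 1)⁻¹) ^ n := by
      rw [Real.exp_neg, show Real.exp (n : ℝ) = Real.exp 1 ^ n by
        rw [← Real.exp_nat_mul, mul_one], ← inv_pow]
    have hbase : (n : ℝ) / (Real.exp 1 * H) = t * (Real.exp 1)⁻¹ := by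
      rw [htdef]
      field_simp
    rw [hexp, ← mul_pow, hbase]
  have hR : ∏ k ∈ Finset.range n, (((k : ℝ) + 1) ^ (c k) * (Nat.factorial (c k) : ℝ)) =
      (∏ i ∈ Finset.range n, (Nat.factorial (a i) : ℝ)) *
        ∏ i ∈ Finset.range n, (Nat.factorial (c i) : ℝ) := by
    rw [Finset.prod_mul_distrib]
    congr 1
    have hcast := congrArg (Nat.cast : ℕ → ℝ) hprodA
    push_cast at hcast
    exact hcast.symm
  rw [← hR, ← hL]
  exact hmain
end

section
/- Let n be a positive integer and let a_1, a_2, …, a_n be non-negative integers with a_1 + a_2 + … + a_n = n. Then ∏_{k=1}^{n} k^{a_k} · a_k! ≥ (n / (e·H_n))^n, where H_n = 1 + 1/2 + … + 1/n is the n-th harmonic number and e is Euler's number. -/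
lemma pow_self_le_factorial_mul_exp (m : ℕ) :
    (m : ℝ) ^ m ≤ (Nat.factorial m : ℝ) * Real.exp 1 ^ m := by
  induction m with
  | zero => simp
  | succ m ih =>
    have hstep : ((m : ℝ) + 1) ^ m ≤ (m : ℝ) ^ m * Real.exp 1 := by
      rcases Nat.eq_zero_or_pos m with hm | hm
      · subst hm; simpa using Real.one_le_exp (by norm_num)
      · have hm' : (m : ℝ) ≠ 0 := by positivity
        have h1 : (m : ℝ) + 1 = (m : ℝ) * (1 + 1 / m) := by field_simp
        calc ((m : ℝ) + 1) ^ m = (m : ℝ) ^ m * (1 + 1 / m) ^ m := by rw [h1, mul_pow]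
          _ ≤ (m : ℝ) ^ m * Real.exp (1 / m) ^ m := by
              have h2 : (1 + 1 / (m:ℝ)) ^ m ≤ Real.exp (1 / m) ^ m :=
                pow_le_pow_left₀ (by positivity)
                  (by simpa [add_comm] using Real.add_one_le_exp (1 / (m:ℝ))) m
              exact mul_le_mul_of_nonneg_left h2 (by positivity)
          _ = (m : ℝ) ^ m * Real.exp 1 := by
              rw [← Real.exp_nat_mul]
              congr 1
              field_simp
    calc ((m + 1 : ℕ) : ℝ) ^ (m + 1) = ((m : ℝ) + 1) * ((m : ℝ) + 1) ^ m := by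
          push_cast; ring
      _ ≤ ((m : ℝ) + 1) * ((m : ℝ) ^ m * Real.exp 1) := by
          have h0 : (0:ℝ) ≤ (m:ℝ) + 1 := by positivity
          exact mul_le_mul_of_nonneg_left (by exact_mod_cast hstep) h0
      _ ≤ ((m : ℝ) + 1) * ((Nat.factorial m : ℝ) * Real.exp 1 ^ m * Real.exp 1) := by
          have he : (0 : ℝ) < Real.exp 1 := Real.exp_pos 1
          have := mul_le_mul_of_nonneg_right ih he.le
          nlinarith [Real.exp_pos 1, pow_pos (Real.exp_pos 1) m,
            mul_le_mul_of_nonneg_right ih he.le]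
      _ = (Nat.factorial (m + 1) : ℝ) * Real.exp 1 ^ (m + 1) := by
          rw [Nat.factorial_succ]; push_cast; ring

/-- Let `n ≥ 1` and let `a 1, …, a n` be non-negative integers with
`a 1 + … + a n = n`. Then `∏_{k=1}^{n} k^(a k) * (a k)! ≥ (n / (e * H_n))^n`,
where `H_n = 1 + 1/2 + … + 1/n`. -/
theorem weighted_factorial_product_bound
    (n : ℕ) (hn : 0 < n) (a : ℕ → ℕ)
    (hsum : ∑ k ∈ Finset.Icc 1 n, a k = n) :
    ((n : ℝ) / (Real.exp 1 * ∑ i ∈ Finset.range n, (1 : ℝ) / (i + 1))) ^ n ≤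
      ∏ k ∈ Finset.Icc 1 n, (k : ℝ) ^ (a k) * (Nat.factorial (a k) : ℝ) := by
  set H : ℝ := ∑ i ∈ Finset.range n, (1 : ℝ) / (i + 1) with hHdef
  have hn' : (0 : ℝ) < n := by exact_mod_cast hn
  have hH : H = ∑ k ∈ Finset.Icc 1 n, (1 : ℝ) / k := by
    rw [hHdef, show Finset.Icc 1 n = Finset.Ico 1 (n+1) from by rw [Finset.Ico_add_one_right_eq_Icc],
      Finset.sum_Ico_eq_sum_range]
    simp [add_comm]
  have hHpos : 0 < H := by
    rw [hHdef]
    apply Finset.sum_pos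
    · intro i _; positivity
    · exact ⟨0, Finset.mem_range.mpr hn⟩
  -- weights and values for AM-GM
  set w : ℕ → ℝ := fun k => (a k : ℝ) / n with hw
  set z : ℕ → ℝ := fun k => ((k : ℝ) * a k)⁻¹ with hz
  have hw' : ∑ k ∈ Finset.Icc 1 n, w k = 1 := by
    rw [hw]
    rw [← Finset.sum_div]
    rw [div_eq_one_iff_eq (ne_of_gt hn')]
    exact_mod_cast hsum
  have key := Real.geom_mean_le_arith_mean_weighted (Finset.Icc 1 n) w z
    (fun i _ => by positivity) hw' (fun i _ => by positivity)
  set P : ℝ := ∏ k ∈ Finset.Icc 1 n, ((k : ℝ) * a k) ^ (a k) with hP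
  have hPpos : 0 < P := by
    apply Finset.prod_pos
    intro k hk
    have hk1 : 1 ≤ k := (Finset.mem_Icc.mp hk).1
    rcases Nat.eq_zero_or_pos (a k) with h | h
    · simp [h]
    · have : (0 : ℝ) < (k : ℝ) * a k := by
        have : (0:ℝ) < (k:ℝ) := by exact_mod_cast hk1
        have h' : (0:ℝ) < (a k : ℝ) := by exact_mod_cast h
        positivity
      positivity
  -- LHS of key equals P ^ (-(1/n))
  have hLHS : ∏ k ∈ Finset.Icc 1 n, z k ^ w k = P ^ (-(1 / n : ℝ)) := by
    rw [hP, ← Real.finset_prod_rpow _ _ (fun k hk => by positivity) _]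
    apply Finset.prod_congr rfl
    intro k hk
    have hk1 : 1 ≤ k := (Finset.mem_Icc.mp hk).1
    have hkpos : (0 : ℝ) < k := by exact_mod_cast hk1
    rcases Nat.eq_zero_or_pos (a k) with h | h
    · simp [hz, hw, h]
    · have hap : (0 : ℝ) < (a k : ℝ) := by exact_mod_cast h
      have hx : (0 : ℝ) < (k : ℝ) * a k := by positivity
      rw [← Real.rpow_natCast ((k : ℝ) * a k) (a k), ← Real.rpow_mul hx.le]
      show ((k : ℝ) * a k)⁻¹ ^ ((a k : ℝ) / n) = ((k : ℝ) * a k) ^ ((a k : ℝ) * -(1 / n))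
      rw [← Real.rpow_neg_one ((k : ℝ) * a k), ← Real.rpow_mul hx.le]
      congr 1
      ring
  -- RHS of key is at most H / n
  have hRHS : ∑ k ∈ Finset.Icc 1 n, w k * z k ≤ H / n := by
    rw [hH, Finset.sum_div]
    apply Finset.sum_le_sum
    intro k hk
    have hk1 : 1 ≤ k := (Finset.mem_Icc.mp hk).1
    have hkpos : (0 : ℝ) < k := by exact_mod_cast hk1
    rcases Nat.eq_zero_or_pos (a k) with h | h
    · have : w k * z k = 0 := by simp [hw, hz, h]
      rw [this]
      positivity
    · have hap : (0 : ℝ) < (a k : ℝ) := by exact_mod_cast h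
      have : w k * z k = 1 / (k : ℝ) / n := by
        show (a k : ℝ) / n * ((k : ℝ) * a k)⁻¹ = 1 / (k : ℝ) / n
        field_simp
      rw [this]
  have h3 : P ^ (-(1 / n : ℝ)) ≤ H / n := by
    rw [← hLHS]; exact key.trans hRHS
  set Q : ℝ := P ^ (1 / n : ℝ) with hQdef
  have hQ : 0 < Q := Real.rpow_pos_of_pos hPpos _
  have h3' : Q⁻¹ ≤ H / n := by
    rwa [Real.rpow_neg hPpos.le] at h3
  have h4 : (n : ℝ) / H ≤ Q := by
    rw [div_le_iff₀ hHpos]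
    have h5 := mul_le_mul_of_nonneg_left h3' hQ.le
    rw [mul_inv_cancel₀ hQ.ne'] at h5
    have h6 := mul_le_mul_of_nonneg_left h5 hn'.le
    have h7 : (n : ℝ) * (Q * (H / n)) = Q * H := by field_simp
    rw [mul_one, h7] at h6
    exact h6
  have hQn : Q ^ n = P := by
    rw [hQdef, ← Real.rpow_natCast (P ^ (1 / n : ℝ)) n, ← Real.rpow_mul hPpos.le,
      one_div, inv_mul_cancel₀ (by exact_mod_cast hn.ne' : (n : ℝ) ≠ 0), Real.rpow_one]
  have h8 : ((n : ℝ) / H) ^ n ≤ P := by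
    rw [← hQn]
    exact pow_le_pow_left₀ (by positivity) h4 n
  have he : (0 : ℝ) < Real.exp 1 := Real.exp_pos 1
  -- final chain
  calc ((n : ℝ) / (Real.exp 1 * H)) ^ n
      = ((n : ℝ) / H) ^ n / Real.exp 1 ^ n := by
        rw [← div_pow]
        congr 1
        rw [div_div, mul_comm]
    _ ≤ P / Real.exp 1 ^ n := by gcongr
    _ = ∏ k ∈ Finset.Icc 1 n, (((k : ℝ) * a k) ^ (a k) / Real.exp 1 ^ (a k)) := by
        have hen : Real.exp 1 ^ n = ∏ k ∈ Finset.Icc 1 n, Real.exp 1 ^ a k := by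
          rw [Finset.prod_pow_eq_pow_sum, hsum]
        rw [hP, hen, ← Finset.prod_div_distrib]
    _ ≤ ∏ k ∈ Finset.Icc 1 n, (k : ℝ) ^ (a k) * (Nat.factorial (a k) : ℝ) := by
        apply Finset.prod_le_prod
        · intro k hk; positivity
        · intro k hk
          rw [div_le_iff₀ (by positivity), mul_pow]
          have := pow_self_le_factorial_mul_exp (a k)
          calc (k : ℝ) ^ (a k) * (a k : ℝ) ^ (a k)
              ≤ (k : ℝ) ^ (a k) * ((Nat.factorial (a k) : ℝ) * Real.exp 1 ^ (a k)) :=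
                mul_le_mul_of_nonneg_left this (by positivity)
            _ = (k : ℝ) ^ (a k) * (Nat.factorial (a k) : ℝ) * Real.exp 1 ^ (a k) := by ring
end
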